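/- arXiv:2206.05527 — 10 statements merged into one kernel-verified Lean document; each statement's English description precedes it below -/
import Mathlib

section
/- Let n ≥ 1 be an integer, R0 ≥ 1, and let 0 < γ0 ≤ 1 ≤ γ1 be real constants. Let A ⊂ B(0,R0/2) ⊂ ℂ^n be a nonempty finite set with weight function ν : A → (0,∞) satisfying ν(a) ≥ γ0 for every a ∈ A and Σ_{a∈A} ν(a) ≤ γ1. Then for every 0 < δ < R0 and every z ∈ B(0,R0/2) with z ∉ A_δ, one has φ(z,A) + (γ1/γ0)·log(δ/R0) ≤ ψ(z,A) ≤ φ(z,A). -/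
open Finset Metric Real

/-- case m = n. Estimate φ(z,A) + (γ1/γ0)·log(δ/R0) ≤ ψ(z,A) ≤ φ(z,A)
for z ∈ B(0,R0/2) outside the sublevel set A_δ. -/
theorem stmt_1 (n : ℕ) (hn : 1 ≤ n) (R0 : ℝ) (hR0 : 1 ≤ R0)
    (γ0 γ1 : ℝ) (hγ0 : 0 < γ0) (hγ0' : γ0 ≤ 1) (hγ1 : 1 ≤ γ1)
    (A : Finset (EuclideanSpace ℂ (Fin n))) (hA : A.Nonempty)
    (hAball : (A : Set (EuclideanSpace ℂ (Fin n))) ⊆ Metric.ball 0 (R0 / 2))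
    (ν : EuclideanSpace ℂ (Fin n) → ℝ)
    (hνpos : ∀ a ∈ A, 0 < ν a)
    (hνlb : ∀ a ∈ A, γ0 ≤ ν a)
    (hνsum : ∑ a ∈ A, ν a ≤ γ1)
    (δ : ℝ) (hδ : 0 < δ) (hδR : δ < R0)
    (z : EuclideanSpace ℂ (Fin n))
    (hzball : z ∈ Metric.ball (0 : EuclideanSpace ℂ (Fin n)) (R0 / 2))
    (hz : z ∉ ⋃ a ∈ A, Metric.ball a (R0 * (δ / R0) ^ (1 / ν a))) :
    A.inf' hA (fun a => ν a * Real.log (‖z - a‖ / R0)) + γ1 / γ0 * Real.log (δ / R0)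
      ≤ ∑ a ∈ A, ν a * Real.log (‖z - a‖ / R0)
    ∧ ∑ a ∈ A, ν a * Real.log (‖z - a‖ / R0)
      ≤ A.inf' hA (fun a => ν a * Real.log (‖z - a‖ / R0)) := by
  classical
  have hR0pos : (0:ℝ) < R0 := lt_of_lt_of_le one_pos hR0
  set L := Real.log (δ / R0) with hLdef
  set t := fun a => ν a * Real.log (‖z - a‖ / R0) with htdef
  have hdR : 0 < δ / R0 := div_pos hδ hR0pos
  have hdR1 : δ / R0 < 1 := (div_lt_one hR0pos).2 hδR
  have hLneg : L ≤ 0 := le_of_lt (Real.log_neg hdR hdR1)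
  simp only [Set.mem_iUnion, Metric.mem_ball, not_exists] at hz
  have hdist : ∀ a ∈ A, R0 * (δ / R0) ^ (1 / ν a) ≤ ‖z - a‖ := by
    intro a ha
    have h2 := hz a ha
    rw [dist_eq_norm] at h2
    exact le_of_not_gt h2
  -- each term is nonpositive
  have hzn : ‖z‖ < R0 / 2 := by
    simpa [dist_zero_right] using hzball
  have ht_le : ∀ a ∈ A, t a ≤ 0 := by
    intro a ha
    have han : ‖a‖ < R0 / 2 := by
      have := hAball ha
      simpa [dist_zero_right] using this
    have hlt : ‖z - a‖ < R0 := by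
      calc ‖z - a‖ ≤ ‖z‖ + ‖a‖ := norm_sub_le _ _
        _ < R0 / 2 + R0 / 2 := by linarith
        _ = R0 := by ring
    have hlog : Real.log (‖z - a‖ / R0) ≤ 0 := by
      apply Real.log_nonpos
      · positivity
      · rw [div_le_one hR0pos]; exact le_of_lt hlt
    exact mul_nonpos_of_nonneg_of_nonpos (le_of_lt (hνpos a ha)) hlog
  -- each term is at least L
  have ht_ge : ∀ a ∈ A, L ≤ t a := by
    intro a ha
    have hν := hνpos a ha
    have hrpos : (0:ℝ) < (δ / R0) ^ (1 / ν a) := Real.rpow_pos_of_pos hdR _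
    have h1 : (δ / R0) ^ (1 / ν a) ≤ ‖z - a‖ / R0 := by
      rw [le_div_iff₀ hR0pos]
      linarith [hdist a ha]
    have h2 : Real.log ((δ / R0) ^ (1 / ν a)) ≤ Real.log (‖z - a‖ / R0) :=
      Real.log_le_log hrpos h1
    rw [Real.log_rpow hdR] at h2
    have h3 : ν a * (1 / ν a * L) ≤ t a :=
      mul_le_mul_of_nonneg_left h2 (le_of_lt hν)
    have h4 : ν a * (1 / ν a * L) = L := by
      field_simp
    linarith
  obtain ⟨a0, ha0, ha0eq⟩ := A.exists_mem_eq_inf' hA t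
  have hsplit : ∑ a ∈ A, t a = t a0 + ∑ a ∈ A.erase a0, t a :=
    (Finset.add_sum_erase A t ha0).symm
  constructor
  · -- lower bound
    have hcard : (A.card : ℝ) ≤ γ1 / γ0 := by
      have h1 : A.card • γ0 ≤ ∑ a ∈ A, ν a :=
        Finset.card_nsmul_le_sum A ν γ0 (fun a ha => hνlb a ha)
      rw [nsmul_eq_mul] at h1
      rw [le_div_iff₀ hγ0]
      linarith
    have hcard' : ((A.erase a0).card : ℝ) ≤ γ1 / γ0 := by
      have := Finset.card_erase_le (a := a0) (s := A)
      have : ((A.erase a0).card : ℝ) ≤ (A.card : ℝ) := by exact_mod_cast this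
      linarith
    have hsum_ge : (A.erase a0).card • L ≤ ∑ a ∈ A.erase a0, t a :=
      Finset.card_nsmul_le_sum _ t L (fun a ha => ht_ge a (Finset.mem_of_mem_erase ha))
    rw [nsmul_eq_mul] at hsum_ge
    have hmul : γ1 / γ0 * L ≤ ((A.erase a0).card : ℝ) * L :=
      mul_le_mul_of_nonpos_right hcard' hLneg
    rw [ha0eq, hsplit]
    linarith
  · -- upper bound
    have hsum_le : ∑ a ∈ A.erase a0, t a ≤ 0 :=
      Finset.sum_nonpos (fun a ha => ht_le a (Finset.mem_of_mem_erase ha))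
    rw [ha0eq, hsplit]
    linarith
end

section
/- Let 1 ≤ m < n be integers, s := n/m − 1, and let 0 < γ0 ≤ 1 ≤ γ1 be real constants. Let A ⊂ ℂ^n be a finite set with at least two elements and weight function ν : A → (0,∞) satisfying ν(a) ≥ γ0 for every a ∈ A and Σ_{a∈A} ν(a) ≤ γ1. Then for every δ with 0 < δ ≤ γ1^{−1/(2s)}·σ_A and every z ∈ A_δ \ A, one has φ(z,A) − δ^{−2s} ≤ ψ(z,A) ≤ φ(z,A). -/
open Finset Metric Real

/-- case 1 ≤ m < n. For δ ≤ γ1^{−1/(2s)}·σ_A and z ∈ A_δ \ A: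
φ(z,A) − δ^{−2s} ≤ ψ(z,A) ≤ φ(z,A). Here 2σ_A is the minimal distance between
distinct points of A, characterized by hσ1 and hσ2. -/
theorem stmt_2 (m n : ℕ) (hm : 1 ≤ m) (hmn : m < n)
    (s : ℝ) (hs : s = (n : ℝ) / (m : ℝ) - 1)
    (γ0 γ1 : ℝ) (hγ0 : 0 < γ0) (hγ0' : γ0 ≤ 1) (hγ1 : 1 ≤ γ1)
    (A : Finset (EuclideanSpace ℂ (Fin n))) (hA : A.Nonempty) (hcard : 1 < A.card)
    (ν : EuclideanSpace ℂ (Fin n) → ℝ)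
    (hνpos : ∀ a ∈ A, 0 < ν a)
    (hνlb : ∀ a ∈ A, γ0 ≤ ν a)
    (hνsum : ∑ a ∈ A, ν a ≤ γ1)
    (σA : ℝ)
    (hσ1 : ∀ a ∈ A, ∀ b ∈ A, a ≠ b → 2 * σA ≤ ‖a - b‖)
    (hσ2 : ∃ a ∈ A, ∃ b ∈ A, a ≠ b ∧ ‖a - b‖ = 2 * σA)
    (δ : ℝ) (hδ : 0 < δ) (hδσ : δ ≤ γ1 ^ (-(1 / (2 * s))) * σA)
    (z : EuclideanSpace ℂ (Fin n))
    (hzA : z ∈ ⋃ a ∈ A, Metric.ball a (ν a ^ (1 / (2 * s)) * δ))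
    (hznA : z ∉ (A : Set (EuclideanSpace ℂ (Fin n)))) :
    A.inf' hA (fun a => -(ν a * ‖z - a‖ ^ (-(2 * s)))) - δ ^ (-(2 * s))
      ≤ ∑ a ∈ A, -(ν a * ‖z - a‖ ^ (-(2 * s)))
    ∧ ∑ a ∈ A, -(ν a * ‖z - a‖ ^ (-(2 * s)))
      ≤ A.inf' hA (fun a => -(ν a * ‖z - a‖ ^ (-(2 * s)))) := by
  classical
  have hγ1pos : (0:ℝ) < γ1 := lt_of_lt_of_le one_pos hγ1
  -- s > 0
  have hs0 : 0 < s := by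
    rw [hs]
    have hm0 : (0:ℝ) < (m:ℝ) := by exact_mod_cast hm
    have : (1:ℝ) < (n:ℝ) / (m:ℝ) := by
      rw [lt_div_iff₀ hm0]
      have : (m:ℝ) < (n:ℝ) := by exact_mod_cast hmn
      linarith
    linarith
  have ht0 : (0:ℝ) < 2 * s := by linarith
  -- σA > 0
  have hσpos : 0 < σA := by
    obtain ⟨a, ha, b, hb, hab, habσ⟩ := hσ2
    have : 0 < ‖a - b‖ := by
      rw [norm_pos_iff]
      exact sub_ne_zero.mpr hab
    linarith [habσ ▸ this]
  -- distances from z to points of A are positive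
  have hdz : ∀ a ∈ A, 0 < ‖z - a‖ := by
    intro a ha
    rw [norm_pos_iff]
    exact sub_ne_zero.mpr (fun h => hznA (h ▸ ha))
  -- extract b from hzA
  obtain ⟨b, hbA, hzb⟩ : ∃ b ∈ A, ‖z - b‖ < ν b ^ (1 / (2 * s)) * δ := by
    simp only [Set.mem_iUnion, Metric.mem_ball] at hzA
    obtain ⟨b, hbA, hzb⟩ := hzA
    exact ⟨b, hbA, by rwa [dist_eq_norm] at hzb⟩
  -- ν b ≤ γ1
  have hνle : ∀ a ∈ A, ν a ≤ γ1 := by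
    intro a ha
    calc ν a ≤ ∑ x ∈ A, ν x :=
          Finset.single_le_sum (fun x hx => (hνpos x hx).le) ha
      _ ≤ γ1 := hνsum
  -- ‖z - b‖ < σA
  have hzbσ : ‖z - b‖ < σA := by
    have h1 : ν b ^ (1 / (2 * s)) ≤ γ1 ^ (1 / (2 * s)) :=
      Real.rpow_le_rpow (hνpos b hbA).le (hνle b hbA) (by positivity)
    have h2 : ν b ^ (1 / (2 * s)) * δ ≤ γ1 ^ (1 / (2 * s)) * (γ1 ^ (-(1 / (2 * s))) * σA) := by
      apply mul_le_mul h1 hδσ hδ.le (by positivity)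
    have h3 : γ1 ^ (1 / (2 * s)) * γ1 ^ (-(1 / (2 * s))) = 1 := by
      rw [← Real.rpow_add hγ1pos]; simp
    calc ‖z - b‖ < ν b ^ (1 / (2 * s)) * δ := hzb
      _ ≤ γ1 ^ (1 / (2 * s)) * (γ1 ^ (-(1 / (2 * s))) * σA) := h2
      _ = σA := by rw [← mul_assoc, h3, one_mul]
  -- for a ≠ b: σA ≤ ‖z - a‖
  have hza : ∀ a ∈ A, a ≠ b → σA ≤ ‖z - a‖ := by
    intro a ha hab
    have h1 : 2 * σA ≤ ‖a - b‖ := hσ1 a ha b hbA hab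
    have h2 : ‖a - b‖ ≤ ‖a - z‖ + ‖z - b‖ := norm_sub_le_norm_sub_add_norm_sub a z b
    have h3 : ‖a - z‖ = ‖z - a‖ := norm_sub_rev a z
    linarith
  -- γ1 * σA ^ (-(2*s)) ≤ δ ^ (-(2*s))
  have hkey : γ1 * σA ^ (-(2 * s)) ≤ δ ^ (-(2 * s)) := by
    have h1 : δ ^ (2 * s) ≤ (γ1 ^ (-(1 / (2 * s))) * σA) ^ (2 * s) :=
      Real.rpow_le_rpow hδ.le hδσ ht0.le
    have h2 : (γ1 ^ (-(1 / (2 * s))) * σA) ^ (2 * s)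
        = γ1⁻¹ * σA ^ (2 * s) := by
      rw [Real.mul_rpow (by positivity) hσpos.le, ← Real.rpow_mul hγ1pos.le]
      have he : -(1 / (2 * s)) * (2 * s) = -1 := by
        field_simp
      rw [he, Real.rpow_neg_one]
    have hδt : 0 < δ ^ (2 * s) := Real.rpow_pos_of_pos hδ _
    have hσt : 0 < σA ^ (2 * s) := Real.rpow_pos_of_pos hσpos _
    rw [h2] at h1
    rw [Real.rpow_neg hδ.le, Real.rpow_neg hσpos.le]
    calc γ1 * (σA ^ (2 * s))⁻¹ = (γ1⁻¹ * σA ^ (2 * s))⁻¹ := by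
          rw [mul_inv, inv_inv]
      _ ≤ (δ ^ (2 * s))⁻¹ := by
          apply inv_anti₀ hδt h1
  -- terms are nonpositive
  have hterm_nonneg : ∀ a ∈ A, 0 ≤ ν a * ‖z - a‖ ^ (-(2 * s)) := by
    intro a ha
    exact mul_nonneg (hνpos a ha).le (Real.rpow_nonneg (norm_nonneg _) _)
  -- sum over erase b bound
  have hsum_erase : ∑ a ∈ A.erase b, ν a * ‖z - a‖ ^ (-(2 * s)) ≤ δ ^ (-(2 * s)) := by
    have h1 : ∑ a ∈ A.erase b, ν a * ‖z - a‖ ^ (-(2 * s))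
        ≤ ∑ a ∈ A.erase b, ν a * σA ^ (-(2 * s)) := by
      apply Finset.sum_le_sum
      intro a ha
      have haA := Finset.mem_of_mem_erase ha
      have hab := Finset.ne_of_mem_erase ha
      apply mul_le_mul_of_nonneg_left _ (hνpos a haA).le
      exact Real.rpow_le_rpow_of_nonpos hσpos (hza a haA hab) (by linarith)
    have h2 : ∑ a ∈ A.erase b, ν a * σA ^ (-(2 * s))
        = (∑ a ∈ A.erase b, ν a) * σA ^ (-(2 * s)) := by
      rw [Finset.sum_mul]
    have h3 : ∑ a ∈ A.erase b, ν a ≤ γ1 := by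
      calc ∑ a ∈ A.erase b, ν a ≤ ∑ a ∈ A, ν a :=
            Finset.sum_le_sum_of_subset_of_nonneg (Finset.erase_subset b A)
              (fun a ha _ => (hνpos a ha).le)
        _ ≤ γ1 := hνsum
    have hσe : 0 < σA ^ (-(2 * s)) := Real.rpow_pos_of_pos hσpos _
    calc ∑ a ∈ A.erase b, ν a * ‖z - a‖ ^ (-(2 * s))
        ≤ (∑ a ∈ A.erase b, ν a) * σA ^ (-(2 * s)) := h2 ▸ h1
      _ ≤ γ1 * σA ^ (-(2 * s)) := mul_le_mul_of_nonneg_right h3 hσe.le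
      _ ≤ δ ^ (-(2 * s)) := hkey
  constructor
  · -- lower bound
    have hinf : A.inf' hA (fun a => -(ν a * ‖z - a‖ ^ (-(2 * s))))
        ≤ -(ν b * ‖z - b‖ ^ (-(2 * s))) := Finset.inf'_le _ hbA
    have hsplit : ∑ a ∈ A, -(ν a * ‖z - a‖ ^ (-(2 * s)))
        = -(ν b * ‖z - b‖ ^ (-(2 * s)))
          + ∑ a ∈ A.erase b, -(ν a * ‖z - a‖ ^ (-(2 * s))) :=
      (Finset.add_sum_erase A _ hbA).symm
    have : ∑ a ∈ A.erase b, -(ν a * ‖z - a‖ ^ (-(2 * s)))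
        = -(∑ a ∈ A.erase b, ν a * ‖z - a‖ ^ (-(2 * s))) := by
      rw [Finset.sum_neg_distrib]
    rw [hsplit, this]
    linarith
  · -- upper bound
    apply Finset.le_inf'
    intro a ha
    have hsplit : ∑ x ∈ A, -(ν x * ‖z - x‖ ^ (-(2 * s)))
        = -(ν a * ‖z - a‖ ^ (-(2 * s)))
          + ∑ x ∈ A.erase a, -(ν x * ‖z - x‖ ^ (-(2 * s))) :=
      (Finset.add_sum_erase A _ ha).symm
    rw [hsplit]
    have : ∑ x ∈ A.erase a, -(ν x * ‖z - x‖ ^ (-(2 * s))) ≤ 0 := by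
      apply Finset.sum_nonpos
      intro x hx
      exact neg_nonpos.mpr (hterm_nonneg x (Finset.mem_of_mem_erase hx))
    linarith
end

section
/- Let n ≥ 1 be an integer, R0 ≥ 1, and let 0 < γ0 ≤ 1 ≤ γ1 be real constants. Let A ⊂ B(0,R0/2) ⊂ ℂ^n be a finite set with at least two elements and weight function ν : A → (0,∞) satisfying ν(a) ≥ γ0 for every a ∈ A and Σ_{a∈A} ν(a) ≤ γ1. Then for every δ with 0 < δ ≤ R0·(σ_A/R0)^{γ1} and every z ∈ (A_δ ∩ B(0,R0/2)) \ A, one has φ(z,A) + log(δ/R0) ≤ ψ(z,A) ≤ φ(z,A). -/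
open Finset Metric Real

/-- case m = n. For δ ≤ R0·(σ_A/R0)^{γ1} and z ∈ (A_δ ∩ B(0,R0/2)) \ A:
φ(z,A) + log(δ/R0) ≤ ψ(z,A) ≤ φ(z,A). Here 2σ_A is the minimal distance between
distinct points of A, characterized by hσ1 and hσ2. -/
theorem stmt_3 (n : ℕ) (hn : 1 ≤ n) (R0 : ℝ) (hR0 : 1 ≤ R0)
    (γ0 γ1 : ℝ) (hγ0 : 0 < γ0) (hγ0' : γ0 ≤ 1) (hγ1 : 1 ≤ γ1)
    (A : Finset (EuclideanSpace ℂ (Fin n))) (hA : A.Nonempty) (hcard : 1 < A.card)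
    (hAball : (A : Set (EuclideanSpace ℂ (Fin n))) ⊆ Metric.ball 0 (R0 / 2))
    (ν : EuclideanSpace ℂ (Fin n) → ℝ)
    (hνpos : ∀ a ∈ A, 0 < ν a)
    (hνlb : ∀ a ∈ A, γ0 ≤ ν a)
    (hνsum : ∑ a ∈ A, ν a ≤ γ1)
    (σA : ℝ)
    (hσ1 : ∀ a ∈ A, ∀ b ∈ A, a ≠ b → 2 * σA ≤ ‖a - b‖)
    (hσ2 : ∃ a ∈ A, ∃ b ∈ A, a ≠ b ∧ ‖a - b‖ = 2 * σA)
    (δ : ℝ) (hδ : 0 < δ) (hδσ : δ ≤ R0 * (σA / R0) ^ γ1)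
    (z : EuclideanSpace ℂ (Fin n))
    (hzA : z ∈ ⋃ a ∈ A, Metric.ball a (R0 * (δ / R0) ^ (1 / ν a)))
    (hzball : z ∈ Metric.ball (0 : EuclideanSpace ℂ (Fin n)) (R0 / 2))
    (hznA : z ∉ (A : Set (EuclideanSpace ℂ (Fin n)))) :
    A.inf' hA (fun a => ν a * Real.log (‖z - a‖ / R0)) + Real.log (δ / R0)
      ≤ ∑ a ∈ A, ν a * Real.log (‖z - a‖ / R0)
    ∧ ∑ a ∈ A, ν a * Real.log (‖z - a‖ / R0)
      ≤ A.inf' hA (fun a => ν a * Real.log (‖z - a‖ / R0)) := by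
  classical
  have hR0pos : (0:ℝ) < R0 := lt_of_lt_of_le one_pos hR0
  set f : EuclideanSpace ℂ (Fin n) → ℝ := fun a => ν a * Real.log (‖z - a‖ / R0) with hf
  obtain ⟨a₀, ha₀A, hz0⟩ : ∃ a ∈ A, z ∈ Metric.ball a (R0 * (δ / R0) ^ (1 / ν a)) := by
    simpa using hzA
  have hσpos : 0 < σA := by
    obtain ⟨a, ha, b, hb, hab, habσ⟩ := hσ2
    have h : 0 < ‖a - b‖ := norm_pos_iff.mpr (sub_ne_zero.mpr hab)
    linarith [habσ ▸ h]
  have hσR : σA < R0 / 2 := by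
    obtain ⟨a, ha, b, hb, hab, habσ⟩ := hσ2
    have ha' := hAball ha
    have hb' := hAball hb
    rw [Metric.mem_ball, dist_zero_right] at ha' hb'
    have h := norm_sub_le a b
    rw [habσ] at h
    linarith
  have hσR1 : σA / R0 ≤ 1 := by
    rw [div_le_one hR0pos]; linarith
  have hν0 := hνpos a₀ ha₀A
  have hνγ : ν a₀ ≤ γ1 :=
    le_trans (Finset.single_le_sum (fun a ha => (hνpos a ha).le) ha₀A) hνsum
  have hδR : δ / R0 ≤ (σA / R0) ^ γ1 := by
    rw [div_le_iff₀ hR0pos]; linarith [hδσ, mul_comm R0 ((σA / R0) ^ γ1)]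
  -- ‖z - a₀‖ < σA
  have hzσ : ‖z - a₀‖ < σA := by
    have h1 : (δ / R0) ^ (1 / ν a₀) ≤ ((σA / R0) ^ γ1) ^ (1 / ν a₀) :=
      Real.rpow_le_rpow (by positivity) hδR (by positivity)
    have h2 : ((σA / R0) ^ γ1) ^ (1 / ν a₀) = (σA / R0) ^ (γ1 * (1 / ν a₀)) :=
      (Real.rpow_mul (by positivity) _ _).symm
    have h3 : (σA / R0) ^ (γ1 * (1 / ν a₀)) ≤ (σA / R0) ^ (1:ℝ) := by
      apply Real.rpow_le_rpow_of_exponent_ge (by positivity) hσR1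
      rw [mul_one_div, le_div_iff₀ hν0, one_mul]; exact hνγ
    rw [Real.rpow_one] at h3
    have hball : ‖z - a₀‖ < R0 * (δ / R0) ^ (1 / ν a₀) := by
      rw [Metric.mem_ball, dist_eq_norm] at hz0; exact hz0
    calc ‖z - a₀‖ < R0 * (δ / R0) ^ (1 / ν a₀) := hball
      _ ≤ R0 * (σA / R0) := by
          apply mul_le_mul_of_nonneg_left _ hR0pos.le
          rw [h2] at h1; exact le_trans h1 h3
      _ = σA := by field_simp
  -- terms are nonpositive
  have hneg : ∀ a ∈ A, f a ≤ 0 := by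
    intro a haA
    have hzne : z ≠ a := fun h => hznA (h ▸ Finset.mem_coe.mpr haA)
    have h1 : (0:ℝ) ≤ ‖z - a‖ := norm_nonneg _
    have h2 : ‖z - a‖ < R0 := by
      have ha' := hAball (Finset.mem_coe.mpr haA)
      rw [Metric.mem_ball, dist_zero_right] at ha'
      rw [Metric.mem_ball, dist_zero_right] at hzball
      have := norm_sub_le z a
      linarith
    have hlog : Real.log (‖z - a‖ / R0) ≤ 0 :=
      Real.log_nonpos (by positivity) ((div_le_one hR0pos).mpr h2.le)
    exact mul_nonpos_iff.mpr (Or.inl ⟨(hνpos a haA).le, hlog⟩)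
  have hlogσ : Real.log (σA / R0) ≤ 0 := Real.log_nonpos (by positivity) hσR1
  -- points other than a₀ are far from z
  have hfar : ∀ a ∈ A.erase a₀, σA ≤ ‖z - a‖ := by
    intro a ha
    obtain ⟨hne, haA⟩ := Finset.mem_erase.mp ha
    have h2σ := hσ1 a haA a₀ ha₀A hne
    have htri : ‖a - a₀‖ ≤ ‖a - z‖ + ‖z - a₀‖ := by
      have := dist_triangle a z a₀
      simpa [dist_eq_norm] using this
    rw [norm_sub_rev a z] at htri
    linarith
  constructor
  · -- lower bound
    have hφ : A.inf' hA f ≤ f a₀ := Finset.inf'_le _ ha₀A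
    have hνsub : ∑ a ∈ A.erase a₀, ν a ≤ γ1 :=
      le_trans (Finset.sum_le_sum_of_subset_of_nonneg (Finset.erase_subset _ _)
        (fun a ha _ => (hνpos a ha).le)) hνsum
    have hrest : Real.log (δ / R0) ≤ ∑ a ∈ A.erase a₀, f a := by
      calc Real.log (δ / R0) ≤ γ1 * Real.log (σA / R0) := by
            rw [← Real.log_rpow (by positivity : (0:ℝ) < σA / R0)]
            exact Real.log_le_log (by positivity) hδR
        _ ≤ (∑ a ∈ A.erase a₀, ν a) * Real.log (σA / R0) :=
            mul_le_mul_of_nonpos_right hνsub hlogσ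
        _ = ∑ a ∈ A.erase a₀, ν a * Real.log (σA / R0) := Finset.sum_mul _ _ _
        _ ≤ ∑ a ∈ A.erase a₀, f a := by
            apply Finset.sum_le_sum
            intro a ha
            have hσa := hfar a ha
            have hlog : Real.log (σA / R0) ≤ Real.log (‖z - a‖ / R0) :=
              Real.log_le_log (by positivity)
                (div_le_div_of_nonneg_right hσa hR0pos.le)
            exact mul_le_mul_of_nonneg_left hlog (hνpos a (Finset.mem_of_mem_erase ha)).le
    have hsum : ∑ a ∈ A, f a = f a₀ + ∑ a ∈ A.erase a₀, f a :=
      (Finset.add_sum_erase _ _ ha₀A).symm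
    rw [hsum]; linarith
  · -- upper bound
    obtain ⟨a₁, ha₁, hinf⟩ := A.exists_mem_eq_inf' hA f
    rw [hinf]
    have hsum : ∑ a ∈ A, f a = f a₁ + ∑ a ∈ A.erase a₁, f a :=
      (Finset.add_sum_erase _ _ ha₁).symm
    have h0 : ∑ a ∈ A.erase a₁, f a ≤ 0 :=
      Finset.sum_nonpos (fun a ha => hneg a (Finset.mem_of_mem_erase ha))
    rw [hsum]; linarith
end

section
/- Let 1 ≤ m < n be integers, s := n/m − 1, and let 0 < γ0 ≤ 1 ≤ γ1 be real constants. Let A ⊂ ℂ^n be a finite set with at least two elements and weight function ν : A → (0,∞) satisfying ν(a) ≥ γ0 for every a ∈ A and Σ_{a∈A} ν(a) ≤ γ1. Then for every z ∈ ℂ^n \ A, one has ψ(z,A) ≤ φ(z,A) ≤ ψ(z,A) + (γ1²/γ0)·σ_A^{−2s}. -/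
open Finset Metric Real

/-- case 1 ≤ m < n. For every z ∉ A:
ψ(z,A) ≤ φ(z,A) ≤ ψ(z,A) + (γ1²/γ0)·σ_A^{−2s}. -/
theorem stmt_4 (m n : ℕ) (hm : 1 ≤ m) (hmn : m < n)
    (s : ℝ) (hs : s = (n : ℝ) / (m : ℝ) - 1)
    (γ0 γ1 : ℝ) (hγ0 : 0 < γ0) (hγ0' : γ0 ≤ 1) (hγ1 : 1 ≤ γ1)
    (A : Finset (EuclideanSpace ℂ (Fin n))) (hA : A.Nonempty) (hcard : 1 < A.card)
    (ν : EuclideanSpace ℂ (Fin n) → ℝ)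
    (hνpos : ∀ a ∈ A, 0 < ν a)
    (hνlb : ∀ a ∈ A, γ0 ≤ ν a)
    (hνsum : ∑ a ∈ A, ν a ≤ γ1)
    (σA : ℝ)
    (hσ1 : ∀ a ∈ A, ∀ b ∈ A, a ≠ b → 2 * σA ≤ ‖a - b‖)
    (hσ2 : ∃ a ∈ A, ∃ b ∈ A, a ≠ b ∧ ‖a - b‖ = 2 * σA)
    (z : EuclideanSpace ℂ (Fin n))
    (hznA : z ∉ (A : Set (EuclideanSpace ℂ (Fin n)))) :
    ∑ a ∈ A, -(ν a * ‖z - a‖ ^ (-(2 * s)))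
      ≤ A.inf' hA (fun a => -(ν a * ‖z - a‖ ^ (-(2 * s))))
    ∧ A.inf' hA (fun a => -(ν a * ‖z - a‖ ^ (-(2 * s))))
      ≤ ∑ a ∈ A, -(ν a * ‖z - a‖ ^ (-(2 * s))) + γ1 ^ 2 / γ0 * σA ^ (-(2 * s)) := by
  classical
  set f : EuclideanSpace ℂ (Fin n) → ℝ := fun a => -(ν a * ‖z - a‖ ^ (-(2 * s))) with hf
  have he : -(2 * s) ≤ 0 := by
    have hs0 : 0 < s := by
      rw [hs]
      have : (1 : ℝ) < (n : ℝ) / (m : ℝ) := by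
        rw [one_lt_div (by exact_mod_cast Nat.lt_of_lt_of_le Nat.zero_lt_one hm)]
        exact_mod_cast hmn
      linarith
    linarith
  have hσpos : 0 < σA := by
    obtain ⟨a, ha, b, hb, hab, habs⟩ := hσ2
    have : 0 < ‖a - b‖ := by
      rw [norm_pos_iff]; exact sub_ne_zero.mpr hab
    linarith [habs ▸ this]
  have hnormpos : ∀ a ∈ A, 0 < ‖z - a‖ := by
    intro a ha
    rw [norm_pos_iff]
    exact sub_ne_zero.mpr (fun h => hznA (h ▸ ha))
  have hterm_nonpos : ∀ a ∈ A, f a ≤ 0 := by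
    intro a ha
    simp only [hf, neg_nonpos]
    exact mul_nonneg (hνpos a ha).le (rpow_nonneg (norm_nonneg _) _)
  constructor
  · obtain ⟨a₀, ha₀, heq⟩ := A.exists_mem_eq_inf' hA f
    rw [heq, ← Finset.add_sum_erase A f ha₀]
    have : ∑ x ∈ A.erase a₀, f x ≤ 0 :=
      Finset.sum_nonpos fun x hx => hterm_nonpos x (Finset.mem_of_mem_erase hx)
    linarith
  · -- take a* nearest to z
    obtain ⟨a₁, ha₁, hmin⟩ := A.exists_min_image (fun a => ‖z - a‖) hA
    have hfar : ∀ a ∈ A, a ≠ a₁ → σA ≤ ‖z - a‖ := by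
      intro a ha hne
      have h1 : 2 * σA ≤ ‖a - a₁‖ := hσ1 a ha a₁ ha₁ hne
      have h2 : ‖a - a₁‖ ≤ ‖z - a‖ + ‖z - a₁‖ := by
        have := norm_sub_le (a - z) (a₁ - z)
        simpa [norm_sub_rev, sub_sub_sub_cancel_right] using this
      have h3 := hmin a ha
      linarith
    have hinf : A.inf' hA f ≤ f a₁ := Finset.inf'_le f ha₁
    have hsum : ∑ a ∈ A, f a = f a₁ + ∑ a ∈ A.erase a₁, f a :=
      (Finset.add_sum_erase A f ha₁).symm
    have hkey : ∑ a ∈ A.erase a₁, (-(f a)) ≤ γ1 ^ 2 / γ0 * σA ^ (-(2 * s)) := by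
      have step1 : ∑ a ∈ A.erase a₁, (-(f a)) ≤ ∑ a ∈ A.erase a₁, ν a * σA ^ (-(2 * s)) := by
        apply Finset.sum_le_sum
        intro a ha
        have haA := Finset.mem_of_mem_erase ha
        have hane := Finset.ne_of_mem_erase ha
        simp only [hf, neg_neg]
        exact mul_le_mul_of_nonneg_left
          (Real.rpow_le_rpow_of_nonpos hσpos (hfar a haA hane) he) (hνpos a haA).le
      have step2 : ∑ a ∈ A.erase a₁, ν a * σA ^ (-(2 * s))
          = (∑ a ∈ A.erase a₁, ν a) * σA ^ (-(2 * s)) := by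
        rw [Finset.sum_mul]
      have step3 : ∑ a ∈ A.erase a₁, ν a ≤ γ1 := by
        have : ∑ a ∈ A.erase a₁, ν a ≤ ∑ a ∈ A, ν a :=
          Finset.sum_le_sum_of_subset_of_nonneg (Finset.erase_subset _ _)
            (fun a ha _ => (hνpos a ha).le)
        linarith
      have hσe : 0 ≤ σA ^ (-(2 * s)) := rpow_nonneg hσpos.le _
      have hγ : γ1 ≤ γ1 ^ 2 / γ0 := by
        rw [le_div_iff₀ hγ0]
        nlinarith
      calc ∑ a ∈ A.erase a₁, (-(f a)) ≤ (∑ a ∈ A.erase a₁, ν a) * σA ^ (-(2 * s)) := by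
            rw [← step2]; exact step1
        _ ≤ γ1 * σA ^ (-(2 * s)) := mul_le_mul_of_nonneg_right step3 hσe
        _ ≤ γ1 ^ 2 / γ0 * σA ^ (-(2 * s)) := mul_le_mul_of_nonneg_right hγ hσe
    have : ∑ a ∈ A.erase a₁, (-(f a)) = -(∑ a ∈ A.erase a₁, f a) := by
      rw [Finset.sum_neg_distrib]
    rw [this] at hkey
    linarith
end

section
/- Let n ≥ 1 be an integer, R0 ≥ 1, and let 0 < γ0 ≤ 1 ≤ γ1 be real constants. Let A ⊂ B(0,R0/2) ⊂ ℂ^n be a finite set with at least two elements and weight function ν : A → (0,∞) satisfying ν(a) ≥ γ0 for every a ∈ A and Σ_{a∈A} ν(a) ≤ γ1. Then for every z ∈ B(0,R0/2) \ A, one has ψ(z,A) ≤ φ(z,A) ≤ ψ(z,A) + (γ1²/γ0)·log(R0/σ_A). -/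
open Finset Metric Real

/-- case m = n. For every z ∈ B(0,R0/2) \ A:
ψ(z,A) ≤ φ(z,A) ≤ ψ(z,A) + (γ1²/γ0)·log(R0/σ_A). -/
theorem stmt_5 (n : ℕ) (hn : 1 ≤ n) (R0 : ℝ) (hR0 : 1 ≤ R0)
    (γ0 γ1 : ℝ) (hγ0 : 0 < γ0) (hγ0' : γ0 ≤ 1) (hγ1 : 1 ≤ γ1)
    (A : Finset (EuclideanSpace ℂ (Fin n))) (hA : A.Nonempty) (hcard : 1 < A.card)
    (hAball : (A : Set (EuclideanSpace ℂ (Fin n))) ⊆ Metric.ball 0 (R0 / 2))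
    (ν : EuclideanSpace ℂ (Fin n) → ℝ)
    (hνpos : ∀ a ∈ A, 0 < ν a)
    (hνlb : ∀ a ∈ A, γ0 ≤ ν a)
    (hνsum : ∑ a ∈ A, ν a ≤ γ1)
    (σA : ℝ)
    (hσ1 : ∀ a ∈ A, ∀ b ∈ A, a ≠ b → 2 * σA ≤ ‖a - b‖)
    (hσ2 : ∃ a ∈ A, ∃ b ∈ A, a ≠ b ∧ ‖a - b‖ = 2 * σA)
    (z : EuclideanSpace ℂ (Fin n))
    (hzball : z ∈ Metric.ball (0 : EuclideanSpace ℂ (Fin n)) (R0 / 2))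
    (hznA : z ∉ (A : Set (EuclideanSpace ℂ (Fin n)))) :
    ∑ a ∈ A, ν a * Real.log (‖z - a‖ / R0)
      ≤ A.inf' hA (fun a => ν a * Real.log (‖z - a‖ / R0))
    ∧ A.inf' hA (fun a => ν a * Real.log (‖z - a‖ / R0))
      ≤ ∑ a ∈ A, ν a * Real.log (‖z - a‖ / R0) + γ1 ^ 2 / γ0 * Real.log (R0 / σA) := by

  classical
  have hR0pos : (0:ℝ) < R0 := by linarith
  set f : EuclideanSpace ℂ (Fin n) → ℝ := fun a => ν a * Real.log (‖z - a‖ / R0) with hf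
  have hznorm : ‖z‖ < R0 / 2 := by simpa [dist_eq_norm] using hzball
  have hnorm_lt : ∀ a ∈ A, ‖z - a‖ < R0 := by
    intro a ha
    have h2 : ‖a‖ < R0 / 2 := by simpa [dist_eq_norm] using hAball ha
    calc ‖z - a‖ ≤ ‖z‖ + ‖a‖ := norm_sub_le _ _
      _ < R0 := by linarith
  have hnorm_pos : ∀ a ∈ A, 0 < ‖z - a‖ := by
    intro a ha
    rw [norm_pos_iff, sub_ne_zero]
    intro h; exact hznA (h ▸ ha)
  have hf_nonpos : ∀ a ∈ A, f a ≤ 0 := by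
    intro a ha
    apply mul_nonpos_of_nonneg_of_nonpos (hνpos a ha).le
    exact Real.log_nonpos (by positivity) ((div_le_one hR0pos).mpr (hnorm_lt a ha).le)
  have part1 : ∑ a ∈ A, f a ≤ A.inf' hA f := by
    apply Finset.le_inf'
    intro b hb
    rw [← Finset.add_sum_erase A f hb]
    have : ∑ a ∈ A.erase b, f a ≤ 0 :=
      Finset.sum_nonpos fun a ha => hf_nonpos a (Finset.mem_of_mem_erase ha)
    linarith
  refine ⟨part1, ?_⟩
  -- sigma positivity and bound
  have hσpos : 0 < σA := by
    obtain ⟨a, ha, b, hb, hab, habs⟩ := hσ2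
    have : 0 < ‖a - b‖ := by rw [norm_pos_iff, sub_ne_zero]; exact hab
    linarith [habs ▸ this]
  have hσle : σA ≤ R0 := by
    obtain ⟨a, ha, b, hb, hab, habs⟩ := hσ2
    have h1 : ‖a‖ < R0 / 2 := by simpa [dist_eq_norm] using hAball ha
    have h2 : ‖b‖ < R0 / 2 := by simpa [dist_eq_norm] using hAball hb
    have := norm_sub_le a b
    rw [habs] at this
    linarith
  have hlog : 0 ≤ Real.log (R0 / σA) :=
    Real.log_nonneg ((one_le_div hσpos).mpr hσle)
  obtain ⟨b, hb, hbmin⟩ := A.exists_min_image (fun a => ‖z - a‖) hA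
  have key : ∀ a ∈ A.erase b, σA ≤ ‖z - a‖ := by
    intro a ha'
    obtain ⟨hab, haA⟩ := Finset.mem_erase.mp ha'
    have h1 := hσ1 a haA b hb hab
    have h2 := hbmin b hb
    have h3 : ‖z - b‖ ≤ ‖z - a‖ := hbmin a haA
    have h4 : ‖a - b‖ ≤ ‖z - a‖ + ‖z - b‖ := by
      calc ‖a - b‖ = ‖(a - z) + (z - b)‖ := by rw [sub_add_sub_cancel]
        _ ≤ ‖a - z‖ + ‖z - b‖ := norm_add_le _ _
        _ = ‖z - a‖ + ‖z - b‖ := by rw [norm_sub_rev]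
    linarith
  have hbound : ∑ a ∈ A.erase b, (-(f a)) ≤ γ1 ^ 2 / γ0 * Real.log (R0 / σA) := by
    have step1 : ∑ a ∈ A.erase b, (-(f a)) ≤ ∑ a ∈ A.erase b, ν a * Real.log (R0 / σA) := by
      apply Finset.sum_le_sum
      intro a ha'
      have haA := Finset.mem_of_mem_erase ha'
      have hpos := hnorm_pos a haA
      have : -(f a) = ν a * Real.log (R0 / ‖z - a‖) := by
        rw [hf]
        have : Real.log (R0 / ‖z - a‖) = - Real.log (‖z - a‖ / R0) := by
          rw [← Real.log_inv, inv_div]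
        rw [this]; ring
      rw [this]
      apply mul_le_mul_of_nonneg_left _ (hνpos a haA).le
      apply Real.log_le_log (by positivity)
      exact div_le_div_of_nonneg_left hR0pos.le hσpos (key a ha')
    have step2 : ∑ a ∈ A.erase b, ν a * Real.log (R0 / σA)
        = (∑ a ∈ A.erase b, ν a) * Real.log (R0 / σA) := by
      rw [Finset.sum_mul]
    have step3 : ∑ a ∈ A.erase b, ν a ≤ γ1 := by
      refine le_trans ?_ hνsum
      apply Finset.sum_le_sum_of_subset_of_nonneg (Finset.erase_subset _ _)
      intro a ha _
      exact (hνpos a ha).le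
    have step4 : γ1 ≤ γ1 ^ 2 / γ0 := by
      rw [le_div_iff₀ hγ0]
      nlinarith
    calc ∑ a ∈ A.erase b, (-(f a)) ≤ (∑ a ∈ A.erase b, ν a) * Real.log (R0 / σA) := by
          rw [← step2]; exact step1
      _ ≤ γ1 * Real.log (R0 / σA) := mul_le_mul_of_nonneg_right step3 hlog
      _ ≤ γ1 ^ 2 / γ0 * Real.log (R0 / σA) := mul_le_mul_of_nonneg_right step4 hlog
  have hinf : A.inf' hA f ≤ f b := Finset.inf'_le f hb
  have hsum : ∑ a ∈ A, f a = f b + ∑ a ∈ A.erase b, f a := (Finset.add_sum_erase A f hb).symm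
  have hneg : ∑ a ∈ A.erase b, (-(f a)) = -(∑ a ∈ A.erase b, f a) := by
    rw [Finset.sum_neg_distrib]
  rw [hneg] at hbound
  calc A.inf' hA f ≤ f b := hinf
    _ ≤ ∑ a ∈ A, f a + γ1 ^ 2 / γ0 * Real.log (R0 / σA) := by rw [hsum]; linarith
end

section
/- Let 1 ≤ m < n be integers, s := n/m − 1, let 0 < γ0 ≤ 1 ≤ γ1 and δ0 > 0 be real constants. Let A, A' ⊂ ℂ^n be nonempty finite sets with weight functions ν : A → (0,∞) and ν' : A' → (0,∞), each satisfying: all weights are ≥ γ0 and the total weight is ≤ γ1. Let ρ ≥ 0 be such that for every a ∈ A there exists a' ∈ A' with |a − a'| + |ν(a) − ν'(a')| ≤ ρ. Then for every δ with 0 < δ ≤ δ0, every z ∈ ℂ^n with z ∉ A_δ, and every z' ∈ ℂ^n with z' ∉ A'_δ, one has φ(z',A') ≤ φ(z,A) + (2s·γ1·γ0^{−(2s+1)/(2s)} + δ0/γ0)·δ^{−2s−1}·(|z − z'| + ρ). -/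
open Finset Metric Real

lemma rpow_neg_lipschitz {p c x y : ℝ} (hp : 0 < p) (hc : 0 < c) (hx : c ≤ x) (hy : c ≤ y) :
    |x ^ (-p) - y ^ (-p)| ≤ p * c ^ (-p - 1) * |x - y| := by
  have key : ∀ u ∈ Set.Ici c, HasDerivWithinAt (fun t : ℝ => t ^ (-p))
      ((-p) * u ^ (-p - 1)) (Set.Ici c) u := fun u hu =>
    (Real.hasDerivAt_rpow_const (Or.inl (ne_of_gt (lt_of_lt_of_le hc hu)))).hasDerivWithinAt
  have bound : ∀ u ∈ Set.Ici c, ‖(-p) * u ^ (-p - 1)‖ ≤ p * c ^ (-p - 1) := by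
    intro u hu
    have hu0 : 0 < u := lt_of_lt_of_le hc hu
    rw [Real.norm_eq_abs, abs_mul, abs_neg, abs_of_pos hp,
      abs_of_pos (Real.rpow_pos_of_pos hu0 _)]
    exact mul_le_mul_of_nonneg_left
      (Real.rpow_le_rpow_of_nonpos hc hu (by linarith)) hp.le
  have := (convex_Ici c).norm_image_sub_le_of_norm_hasDerivWithin_le key bound hy hx
  simpa [Real.norm_eq_abs, abs_sub_comm] using this

set_option maxHeartbeats 800000 in
/-- case 1 ≤ m < n. Lipschitz-type estimate for φ:
φ(z',A') ≤ φ(z,A) + (2s·γ1·γ0^{−(2s+1)/(2s)} + δ0/γ0)·δ^{−2s−1}·(|z − z'| + ρ). -/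
theorem stmt_6 (m n : ℕ) (hm : 1 ≤ m) (hmn : m < n)
    (s : ℝ) (hs : s = (n : ℝ) / (m : ℝ) - 1)
    (γ0 γ1 : ℝ) (hγ0 : 0 < γ0) (hγ0' : γ0 ≤ 1) (hγ1 : 1 ≤ γ1)
    (δ0 : ℝ) (hδ0 : 0 < δ0)
    (A A' : Finset (EuclideanSpace ℂ (Fin n))) (hA : A.Nonempty) (hA' : A'.Nonempty)
    (ν ν' : EuclideanSpace ℂ (Fin n) → ℝ)
    (hνpos : ∀ a ∈ A, 0 < ν a) (hνlb : ∀ a ∈ A, γ0 ≤ ν a) (hνsum : ∑ a ∈ A, ν a ≤ γ1)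
    (hν'pos : ∀ a ∈ A', 0 < ν' a) (hν'lb : ∀ a ∈ A', γ0 ≤ ν' a)
    (hν'sum : ∑ a ∈ A', ν' a ≤ γ1)
    (ρ : ℝ) (hρ : 0 ≤ ρ)
    (hcover : ∀ a ∈ A, ∃ a' ∈ A', ‖a - a'‖ + |ν a - ν' a'| ≤ ρ)
    (δ : ℝ) (hδ : 0 < δ) (hδδ0 : δ ≤ δ0)
    (z : EuclideanSpace ℂ (Fin n))
    (hz : z ∉ ⋃ a ∈ A, Metric.ball a (ν a ^ (1 / (2 * s)) * δ))
    (z' : EuclideanSpace ℂ (Fin n))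
    (hz' : z' ∉ ⋃ a ∈ A', Metric.ball a (ν' a ^ (1 / (2 * s)) * δ)) :
    A'.inf' hA' (fun a => -(ν' a * ‖z' - a‖ ^ (-(2 * s))))
      ≤ A.inf' hA (fun a => -(ν a * ‖z - a‖ ^ (-(2 * s))))
        + (2 * s * γ1 * γ0 ^ (-(2 * s + 1) / (2 * s)) + δ0 / γ0)
          * δ ^ (-(2 * s) - 1) * (‖z - z'‖ + ρ) := by
  -- s > 0
  have hm0 : (0:ℝ) < m := by exact_mod_cast hm
  have hs0 : 0 < s := by
    rw [hs]
    have h1 : (1:ℝ) < (n:ℝ) / m := by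
      rw [lt_div_iff₀ hm0]; push_cast; exact_mod_cast by linarith [hmn]
    linarith
  set p : ℝ := 2 * s with hpdef
  have hp : 0 < p := by positivity
  -- distance lower bounds
  have hzA : ∀ a ∈ A, ν a ^ (1 / (2 * s)) * δ ≤ ‖z - a‖ := by
    intro a ha
    by_contra h
    push_neg at h
    exact hz (Set.mem_biUnion ha (by rw [mem_ball, dist_eq_norm]; exact h))
  have hz'A' : ∀ a ∈ A', ν' a ^ (1 / (2 * s)) * δ ≤ ‖z' - a‖ := by
    intro a ha
    by_contra h
    push_neg at h
    exact hz' (Set.mem_biUnion ha (by rw [mem_ball, dist_eq_norm]; exact h))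
  set c : ℝ := γ0 ^ (1 / p) * δ with hcdef
  have hc : 0 < c := by positivity
  have hge : ∀ a ∈ A, c ≤ ‖z - a‖ := by
    intro a ha
    refine le_trans (mul_le_mul_of_nonneg_right ?_ hδ.le) (hzA a ha)
    exact Real.rpow_le_rpow hγ0.le (hνlb a ha) (by positivity)
  have hge' : ∀ a ∈ A', c ≤ ‖z' - a‖ := by
    intro a ha
    refine le_trans (mul_le_mul_of_nonneg_right ?_ hδ.le) (hz'A' a ha)
    exact Real.rpow_le_rpow hγ0.le (hν'lb a ha) (by positivity)
  -- choose minimizer a and its partner a'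
  obtain ⟨a, ha, hamin⟩ := A.exists_mem_eq_inf' hA (fun a => -(ν a * ‖z - a‖ ^ (-p)))
  obtain ⟨a', ha', hcov⟩ := hcover a ha
  have hLHS : A'.inf' hA' (fun a => -(ν' a * ‖z' - a‖ ^ (-p)))
      ≤ -(ν' a' * ‖z' - a'‖ ^ (-p)) := Finset.inf'_le _ ha'
  rw [hamin]
  refine le_trans hLHS ?_
  -- abbreviations
  set r : ℝ := ‖z - a‖ with hrdef
  set r' : ℝ := ‖z' - a'‖ with hr'def
  have hrc : c ≤ r := hge a ha
  have hr'c : c ≤ r' := hge' a' ha'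
  have hr0 : 0 < r := lt_of_lt_of_le hc hrc
  have hr'0 : 0 < r' := lt_of_lt_of_le hc hr'c
  have hνa : ν a ≤ γ1 := le_trans (Finset.single_le_sum (fun b hb => (hνpos b hb).le) ha) hνsum
  -- |r - r'| ≤ ‖z - z'‖ + ‖a - a'‖
  have hrr' : |r - r'| ≤ ‖z - z'‖ + ‖a - a'‖ := by
    have h1 : |r - r'| ≤ ‖(z - a) - (z' - a')‖ := abs_norm_sub_norm_le _ _
    have h2 : (z - a) - (z' - a') = (z - z') + (a' - a) := by abel
    rw [h2] at h1
    refine h1.trans ?_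
    have := norm_add_le (z - z') (a' - a)
    rw [norm_sub_rev a' a] at this
    exact this
  have haa' : ‖a - a'‖ ≤ ρ := le_trans (le_add_of_nonneg_right (abs_nonneg _)) hcov
  have hνν' : |ν a - ν' a'| ≤ ρ := le_trans (le_add_of_nonneg_left (norm_nonneg _)) hcov
  -- Lipschitz bound for rpow
  have hlip : |r ^ (-p) - r' ^ (-p)| ≤ p * c ^ (-p - 1) * |r - r'| :=
    rpow_neg_lipschitz hp hc hrc hr'c
  -- c ^ (-p-1) = γ0 ^ ((-p-1)/p) * δ ^ (-p-1)
  have hp' : p ≠ 0 := hp.ne'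
  have hcpow : c ^ (-p - 1) = γ0 ^ (-(p + 1) / p) * δ ^ (-p - 1) := by
    rw [hcdef, Real.mul_rpow (by positivity) hδ.le, ← Real.rpow_mul hγ0.le]
    congr 1
    field_simp
    ring
  -- r'^{-p} ≤ γ0⁻¹ * δ0 * δ^(-p-1)
  have hr'pow : r' ^ (-p) ≤ γ0⁻¹ * δ0 * δ ^ (-p - 1) := by
    have h1 : r' ^ (-p) ≤ c ^ (-p) :=
      Real.rpow_le_rpow_of_nonpos hc hr'c (by linarith)
    have h2 : c ^ (-p) = γ0⁻¹ * δ ^ (-p) := by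
      rw [hcdef, Real.mul_rpow (by positivity) hδ.le, ← Real.rpow_mul hγ0.le]
      rw [show (1 / p) * (-p) = -1 by field_simp, Real.rpow_neg_one]
    have h3 : δ ^ (-p) = δ * δ ^ (-p - 1) := by
      have h4 := Real.rpow_add hδ 1 (-p - 1)
      rw [Real.rpow_one] at h4
      rw [← h4]
      congr 1
      ring
    have hD : 0 ≤ δ ^ (-p - 1) := (Real.rpow_pos_of_pos hδ _).le
    calc r' ^ (-p) ≤ γ0⁻¹ * (δ * δ ^ (-p - 1)) := by rw [← h3]; rw [h2] at h1; exact h1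
      _ ≤ γ0⁻¹ * δ0 * δ ^ (-p - 1) := by
          rw [mul_assoc γ0⁻¹ δ0]
          exact mul_le_mul_of_nonneg_left
            (mul_le_mul_of_nonneg_right hδδ0 hD) (by positivity)
  -- assemble
  rw [hcpow] at hlip
  set G : ℝ := γ0 ^ (-(p + 1) / p) with hGdef
  set D : ℝ := δ ^ (-p - 1) with hDdef
  have hG : 0 ≤ G := (Real.rpow_pos_of_pos hγ0 _).le
  have hD : 0 ≤ D := (Real.rpow_pos_of_pos hδ _).le
  set W : ℝ := ‖z - z'‖ + ρ with hWdef
  have hW0 : 0 ≤ W := by positivity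
  have hd1 : |r - r'| ≤ W := hrr'.trans (by rw [hWdef]; linarith)
  have hνa0 : 0 ≤ ν a := (hνpos a ha).le
  have hr'p : 0 ≤ r' ^ (-p) := (Real.rpow_pos_of_pos hr'0 _).le
  have hlip2 : |r ^ (-p) - r' ^ (-p)| ≤ p * (G * D) * W := by
    calc |r ^ (-p) - r' ^ (-p)| ≤ p * (G * D) * |r - r'| := hlip
      _ ≤ p * (G * D) * W := mul_le_mul_of_nonneg_left hd1 (by positivity)
  have t1 : ν a * (r ^ (-p) - r' ^ (-p)) ≤ γ1 * (p * (G * D) * W) := by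
    calc ν a * (r ^ (-p) - r' ^ (-p)) ≤ ν a * |r ^ (-p) - r' ^ (-p)| :=
          mul_le_mul_of_nonneg_left (le_abs_self _) hνa0
      _ ≤ γ1 * |r ^ (-p) - r' ^ (-p)| :=
          mul_le_mul_of_nonneg_right hνa (abs_nonneg _)
      _ ≤ γ1 * (p * (G * D) * W) :=
          mul_le_mul_of_nonneg_left hlip2 (by linarith)
  have t2 : (ν a - ν' a') * r' ^ (-p) ≤ W * (γ0⁻¹ * δ0 * D) := by
    calc (ν a - ν' a') * r' ^ (-p) ≤ |ν a - ν' a'| * r' ^ (-p) :=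
          mul_le_mul_of_nonneg_right (le_abs_self _) hr'p
      _ ≤ ρ * r' ^ (-p) := mul_le_mul_of_nonneg_right hνν' hr'p
      _ ≤ ρ * (γ0⁻¹ * δ0 * D) := mul_le_mul_of_nonneg_left hr'pow hρ
      _ ≤ W * (γ0⁻¹ * δ0 * D) := by
          refine mul_le_mul_of_nonneg_right ?_ (by positivity)
          rw [hWdef]; linarith [norm_nonneg (z - z')]
  have hkey : (p * γ1 * G + δ0 / γ0) * D * W
      = γ1 * (p * (G * D) * W) + W * (γ0⁻¹ * δ0 * D) := by
    field_simp
  have texp : ν a * r ^ (-p) - ν' a' * r' ^ (-p)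
      = ν a * (r ^ (-p) - r' ^ (-p)) + (ν a - ν' a') * r' ^ (-p) := by ring
  rw [hkey]
  have final : ν a * r ^ (-p) - ν' a' * r' ^ (-p)
      ≤ γ1 * (p * (G * D) * W) + W * (γ0⁻¹ * δ0 * D) := by
    rw [texp]; exact add_le_add t1 t2
  linarith [final]
end

section
/- Let n ≥ 1 be an integer, R0 ≥ 1, and let 0 < γ0 ≤ 1 ≤ γ1 and 0 < δ0 < R0 be real constants. Let A, A' ⊂ B(0,R0/2) ⊂ ℂ^n be nonempty finite sets with weight functions ν : A → (0,∞) and ν' : A' → (0,∞), each satisfying: all weights are ≥ γ0 and the total weight is ≤ γ1. Let ρ ≥ 0 be such that for every a ∈ A there exists a' ∈ A' with |a − a'| + |ν(a) − ν'(a')| ≤ ρ. Then for every δ with 0 < δ ≤ δ0, every z ∈ B(0,R0/2) with z ∉ A_δ, and every z' ∈ B(0,R0/2) with z' ∉ A'_δ, one has φ(z',A') ≤ φ(z,A) + 2γ1·(R0/δ)^{1/γ0}·(|z − z'| + ρ). -/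
set_option maxHeartbeats 1000000


open Finset Metric Real

/-- case m = n. Lipschitz-type estimate for φ:
φ(z',A') ≤ φ(z,A) + 2γ1·(R0/δ)^{1/γ0}·(|z − z'| + ρ). -/
theorem stmt_7 (n : ℕ) (hn : 1 ≤ n) (R0 : ℝ) (hR0 : 1 ≤ R0)
    (γ0 γ1 : ℝ) (hγ0 : 0 < γ0) (hγ0' : γ0 ≤ 1) (hγ1 : 1 ≤ γ1)
    (δ0 : ℝ) (hδ0 : 0 < δ0) (hδ0R : δ0 < R0)
    (A A' : Finset (EuclideanSpace ℂ (Fin n))) (hA : A.Nonempty) (hA' : A'.Nonempty)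
    (hAball : (A : Set (EuclideanSpace ℂ (Fin n))) ⊆ Metric.ball 0 (R0 / 2))
    (hA'ball : (A' : Set (EuclideanSpace ℂ (Fin n))) ⊆ Metric.ball 0 (R0 / 2))
    (ν ν' : EuclideanSpace ℂ (Fin n) → ℝ)
    (hνpos : ∀ a ∈ A, 0 < ν a) (hνlb : ∀ a ∈ A, γ0 ≤ ν a) (hνsum : ∑ a ∈ A, ν a ≤ γ1)
    (hν'pos : ∀ a ∈ A', 0 < ν' a) (hν'lb : ∀ a ∈ A', γ0 ≤ ν' a)
    (hν'sum : ∑ a ∈ A', ν' a ≤ γ1)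
    (ρ : ℝ) (hρ : 0 ≤ ρ)
    (hcover : ∀ a ∈ A, ∃ a' ∈ A', ‖a - a'‖ + |ν a - ν' a'| ≤ ρ)
    (δ : ℝ) (hδ : 0 < δ) (hδδ0 : δ ≤ δ0)
    (z : EuclideanSpace ℂ (Fin n))
    (hzball : z ∈ Metric.ball (0 : EuclideanSpace ℂ (Fin n)) (R0 / 2))
    (hz : z ∉ ⋃ a ∈ A, Metric.ball a (R0 * (δ / R0) ^ (1 / ν a)))
    (z' : EuclideanSpace ℂ (Fin n))
    (hz'ball : z' ∈ Metric.ball (0 : EuclideanSpace ℂ (Fin n)) (R0 / 2))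
    (hz' : z' ∉ ⋃ a ∈ A', Metric.ball a (R0 * (δ / R0) ^ (1 / ν' a))) :
    A'.inf' hA' (fun a => ν' a * Real.log (‖z' - a‖ / R0))
      ≤ A.inf' hA (fun a => ν a * Real.log (‖z - a‖ / R0))
        + 2 * γ1 * (R0 / δ) ^ (1 / γ0) * (‖z - z'‖ + ρ) := by
  classical
  obtain ⟨a₀, ha₀, hmin⟩ := A.exists_mem_eq_inf' hA (fun a => ν a * Real.log (‖z - a‖ / R0))
  obtain ⟨a', ha', hρa⟩ := hcover a₀ ha₀
  set K : ℝ := (R0 / δ) ^ (1 / γ0) with hKdef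
  have hR0pos : (0:ℝ) < R0 := lt_of_lt_of_le one_pos hR0
  have hδR0 : δ < R0 := hδδ0.trans_lt hδ0R
  have hbase1 : (1:ℝ) ≤ R0 / δ := (one_le_div hδ).mpr hδR0.le
  have hbasepos : (0:ℝ) < R0 / δ := by positivity
  have hK1 : (1:ℝ) ≤ K := Real.one_le_rpow hbase1 (by positivity)
  have hK0 : (0:ℝ) < K := lt_of_lt_of_le one_pos hK1
  have hsb0 : (0:ℝ) < δ / R0 := by positivity
  have hsb1 : δ / R0 ≤ 1 := by
    rw [div_le_one hR0pos]; exact hδR0.le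
  have hsbK : (δ / R0) ^ (1 / γ0) = K⁻¹ := by
    rw [hKdef, ← Real.inv_rpow hbasepos.le, inv_div]
  simp only [Set.mem_iUnion, not_exists] at hz hz'
  have hv1 : R0 * (δ / R0) ^ (1 / ν a₀) ≤ ‖z - a₀‖ := by
    have := hz a₀ ha₀
    rw [Metric.mem_ball, not_lt, dist_eq_norm] at this
    exact this
  have hu1 : R0 * (δ / R0) ^ (1 / ν' a') ≤ ‖z' - a'‖ := by
    have := hz' a' ha'
    rw [Metric.mem_ball, not_lt, dist_eq_norm] at this
    exact this
  have hνa₀ : 0 < ν a₀ := hνpos a₀ ha₀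
  have hν'a' : 0 < ν' a' := hν'pos a' ha'
  have hv0 : 0 < ‖z - a₀‖ := lt_of_lt_of_le (by positivity) hv1
  have hu0 : 0 < ‖z' - a'‖ := lt_of_lt_of_le (by positivity) hu1
  have hzn : ‖z‖ < R0 / 2 := by rwa [Metric.mem_ball, dist_zero_right] at hzball
  have hz'n : ‖z'‖ < R0 / 2 := by rwa [Metric.mem_ball, dist_zero_right] at hz'ball
  have ha₀n : ‖a₀‖ < R0 / 2 := by
    have := hAball ha₀
    rwa [Metric.mem_ball, dist_zero_right] at this
  have ha'n : ‖a'‖ < R0 / 2 := by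
    have := hA'ball ha'
    rwa [Metric.mem_ball, dist_zero_right] at this
  have hvR : ‖z - a₀‖ < R0 := by
    calc ‖z - a₀‖ ≤ ‖z‖ + ‖a₀‖ := norm_sub_le _ _
    _ < R0 / 2 + R0 / 2 := add_lt_add hzn ha₀n
    _ = R0 := by ring
  have huR : ‖z' - a'‖ < R0 := by
    calc ‖z' - a'‖ ≤ ‖z'‖ + ‖a'‖ := norm_sub_le _ _
    _ < R0 / 2 + R0 / 2 := add_lt_add hz'n ha'n
    _ = R0 := by ring
  have hγν : 1 / ν a₀ ≤ 1 / γ0 := one_div_le_one_div_of_le hγ0 (hνlb a₀ ha₀)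
  have hsbmono : K⁻¹ ≤ (δ / R0) ^ (1 / ν a₀) := by
    rw [← hsbK]
    exact Real.rpow_le_rpow_of_exponent_ge hsb0 hsb1 hγν
  have hvKinv : K⁻¹ ≤ ‖z - a₀‖ := by nlinarith
  have hinvvK : (‖z - a₀‖)⁻¹ ≤ K := by
    rw [inv_le_comm₀ hv0 hK0]
    exact hvKinv
  have hlogK : Real.log K = (1 / γ0) * Real.log (R0 / δ) := Real.log_rpow hbasepos _
  have hlogKK : Real.log K ≤ K := (Real.log_le_sub_one_of_pos hK0).trans (by linarith)
  have hlogv_ub : Real.log (‖z - a₀‖ / R0) ≤ 0 :=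
    Real.log_nonpos (by positivity) ((div_le_one hR0pos).mpr hvR.le)
  have hlogv_lb : -K ≤ Real.log (‖z - a₀‖ / R0) := by
    have h1 : (δ / R0) ^ (1 / ν a₀) ≤ ‖z - a₀‖ / R0 := by
      rw [le_div_iff₀ hR0pos]; nlinarith
    have h2 : Real.log ((δ / R0) ^ (1 / ν a₀)) ≤ Real.log (‖z - a₀‖ / R0) :=
      Real.log_le_log (by positivity) h1
    have h3 : Real.log ((δ / R0) ^ (1 / ν a₀)) = (1 / ν a₀) * Real.log (δ / R0) :=
      Real.log_rpow hsb0 _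
    have h4 : Real.log (δ / R0) = - Real.log (R0 / δ) := by
      rw [← Real.log_inv, inv_div]
    have h5 : 0 ≤ Real.log (R0 / δ) := Real.log_nonneg hbase1
    have h6 : (1 / ν a₀) * Real.log (R0 / δ) ≤ (1 / γ0) * Real.log (R0 / δ) :=
      mul_le_mul_of_nonneg_right hγν h5
    rw [h3, h4] at h2
    rw [hlogK] at hlogKK
    linarith
  have hνγ1 : ν a₀ ≤ γ1 :=
    le_trans (Finset.single_le_sum (fun i hi => (hνpos i hi).le) ha₀) hνsum
  have hν'γ1 : ν' a' ≤ γ1 :=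
    le_trans (Finset.single_le_sum (fun i hi => (hν'pos i hi).le) ha') hν'sum
  have haa' : ‖a₀ - a'‖ ≤ ρ := by
    have := abs_nonneg (ν a₀ - ν' a')
    linarith
  have hνν' : |ν' a' - ν a₀| ≤ ρ := by
    have := norm_nonneg (a₀ - a')
    rw [abs_sub_comm]
    linarith
  have huv : ‖z' - a'‖ - ‖z - a₀‖ ≤ ‖z - z'‖ + ρ := by
    have h1 : ‖z' - a'‖ ≤ ‖z - a₀‖ + ‖(z' - a') - (z - a₀)‖ := by
      have := norm_add_le (z - a₀) ((z' - a') - (z - a₀))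
      simpa using this
    have h2 : ‖(z' - a') - (z - a₀)‖ = ‖(z' - z) + (a₀ - a')‖ := by
      congr 1; abel
    have h3 : ‖(z' - z) + (a₀ - a')‖ ≤ ‖z' - z‖ + ‖a₀ - a'‖ := norm_add_le _ _
    have h4 : ‖z' - z‖ = ‖z - z'‖ := norm_sub_rev _ _
    rw [h2] at h1
    linarith
  have hzz' : 0 ≤ ‖z - z'‖ := norm_nonneg _
  -- log difference bound
  have hT1 : Real.log (‖z' - a'‖ / R0) - Real.log (‖z - a₀‖ / R0)
      ≤ K * (‖z - z'‖ + ρ) := by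
    have hd : Real.log (‖z' - a'‖ / R0) - Real.log (‖z - a₀‖ / R0)
        = Real.log (‖z' - a'‖ / ‖z - a₀‖) := by
      rw [Real.log_div hu0.ne' hR0pos.ne', Real.log_div hv0.ne' hR0pos.ne',
        Real.log_div hu0.ne' hv0.ne']
      ring
    rw [hd]
    have h1 : Real.log (‖z' - a'‖ / ‖z - a₀‖) ≤ ‖z' - a'‖ / ‖z - a₀‖ - 1 :=
      Real.log_le_sub_one_of_pos (by positivity)
    have h2 : ‖z' - a'‖ / ‖z - a₀‖ - 1 = (‖z' - a'‖ - ‖z - a₀‖) * (‖z - a₀‖)⁻¹ := by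
      field_simp
    have h3 : (‖z' - a'‖ - ‖z - a₀‖) * (‖z - a₀‖)⁻¹ ≤ (‖z - z'‖ + ρ) * K := by
      rcases le_or_gt (‖z' - a'‖ - ‖z - a₀‖) 0 with h | h
      · have : (‖z' - a'‖ - ‖z - a₀‖) * (‖z - a₀‖)⁻¹ ≤ 0 :=
          mul_nonpos_of_nonpos_of_nonneg h (by positivity)
        nlinarith
      · have := mul_le_mul huv hinvvK (by positivity) (by linarith)
        linarith
    linarith
  -- main estimate for the chosen points
  have hmain : ν' a' * Real.log (‖z' - a'‖ / R0)
      ≤ ν a₀ * Real.log (‖z - a₀‖ / R0) + 2 * γ1 * K * (‖z - z'‖ + ρ) := by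
    have hd1 : ν' a' * (Real.log (‖z' - a'‖ / R0) - Real.log (‖z - a₀‖ / R0))
        ≤ γ1 * (K * (‖z - z'‖ + ρ)) := by
      have hb : 0 ≤ K * (‖z - z'‖ + ρ) := by positivity
      calc ν' a' * (Real.log (‖z' - a'‖ / R0) - Real.log (‖z - a₀‖ / R0))
          ≤ ν' a' * (K * (‖z - z'‖ + ρ)) := by
            exact mul_le_mul_of_nonneg_left hT1 hν'a'.le
        _ ≤ γ1 * (K * (‖z - z'‖ + ρ)) := mul_le_mul_of_nonneg_right hν'γ1 hb
    have hd2 : (ν' a' - ν a₀) * Real.log (‖z - a₀‖ / R0) ≤ ρ * K := by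
      have habs : |Real.log (‖z - a₀‖ / R0)| ≤ K := by
        rw [abs_le]; constructor <;> linarith
      calc (ν' a' - ν a₀) * Real.log (‖z - a₀‖ / R0)
          ≤ |(ν' a' - ν a₀) * Real.log (‖z - a₀‖ / R0)| := le_abs_self _
        _ = |ν' a' - ν a₀| * |Real.log (‖z - a₀‖ / R0)| := abs_mul _ _
        _ ≤ ρ * K := mul_le_mul hνν' habs (abs_nonneg _) hρ
    have hρ1 : ρ ≤ γ1 * (‖z - z'‖ + ρ) := by nlinarith
    have hρK : ρ * K ≤ γ1 * (K * (‖z - z'‖ + ρ)) := by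
      nlinarith [mul_le_mul_of_nonneg_right hρ1 hK0.le]
    rw [mul_sub] at hd1
    rw [sub_mul] at hd2
    linarith
  calc A'.inf' hA' (fun a => ν' a * Real.log (‖z' - a‖ / R0))
      ≤ ν' a' * Real.log (‖z' - a'‖ / R0) := Finset.inf'_le _ ha'
    _ ≤ ν a₀ * Real.log (‖z - a₀‖ / R0) + 2 * γ1 * K * (‖z - z'‖ + ρ) := hmain
    _ = A.inf' hA (fun a => ν a * Real.log (‖z - a‖ / R0))
        + 2 * γ1 * K * (‖z - z'‖ + ρ) := by rw [hmin]
end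

section
/- Let 1 ≤ m < n be integers, s := n/m − 1, let 0 < γ0 ≤ 1 ≤ γ1 and δ0 > 0 be real constants. Let A, A' ⊂ ℂ^n be nonempty finite sets with weight functions ν : A → (0,∞) and ν' : A' → (0,∞), each satisfying: all weights are ≥ γ0 and the total weight is ≤ γ1. Let ρ ≥ 0 and suppose there is a bijection β : A → A' such that |a − β(a)| + |ν(a) − ν'(β(a))| ≤ ρ for every a ∈ A. Then for every δ with 0 < δ ≤ δ0, every z ∈ ℂ^n with z ∉ A_δ, and every z' ∈ ℂ^n with z' ∉ A'_δ, one has ψ(z',A') ≤ ψ(z,A) + (2s·γ1·γ0^{−(2s+1)/(2s)} + γ1·δ0/γ0²)·δ^{−2s−1}·(|z − z'| + ρ). -/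
open Finset Metric Real

theorem lip_aux (p c : ℝ) (hp : 0 < p) (hc : 0 < c) (t1 t2 : ℝ) (h1 : c ≤ t1) (h2 : c ≤ t2) :
    t1 ^ (-p) - t2 ^ (-p) ≤ p * c ^ (-p - 1) * |t1 - t2| := by
  have key : |t2 ^ (-p) - t1 ^ (-p)| ≤ p * c ^ (-p - 1) * |t2 - t1| := by
    have hderiv : ∀ x ∈ Set.Ici c, HasDerivWithinAt (fun t : ℝ => t ^ (-p))
        ((-p) * x ^ (-p - 1)) (Set.Ici c) x := by
      intro x hx
      have hx0 : x ≠ 0 := (lt_of_lt_of_le hc hx).ne'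
      exact (Real.hasDerivAt_rpow_const (Or.inl hx0)).hasDerivWithinAt
    have bound : ∀ x ∈ Set.Ici c, ‖(-p) * x ^ (-p - 1)‖ ≤ p * c ^ (-p - 1) := by
      intro x hx
      have hx0 : 0 < x := lt_of_lt_of_le hc hx
      rw [norm_mul, norm_neg, Real.norm_eq_abs, Real.norm_eq_abs,
        abs_of_pos hp, abs_of_pos (rpow_pos_of_pos hx0 _)]
      exact mul_le_mul_of_nonneg_left
        (Real.rpow_le_rpow_of_nonpos hc hx (by linarith)) hp.le
    have := Convex.norm_image_sub_le_of_norm_hasDerivWithin_le hderiv bound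
      (convex_Ici c) h1 h2
    simpa [Real.norm_eq_abs] using this
  calc t1 ^ (-p) - t2 ^ (-p) ≤ |t1 ^ (-p) - t2 ^ (-p)| := le_abs_self _
    _ = |t2 ^ (-p) - t1 ^ (-p)| := abs_sub_comm _ _
    _ ≤ p * c ^ (-p - 1) * |t2 - t1| := key
    _ = p * c ^ (-p - 1) * |t1 - t2| := by rw [abs_sub_comm]

/-- case 1 ≤ m < n. Lipschitz-type estimate for ψ along a bijection of poles:
ψ(z',A') ≤ ψ(z,A) + (2s·γ1·γ0^{−(2s+1)/(2s)} + γ1·δ0/γ0²)·δ^{−2s−1}·(|z − z'| + ρ). -/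
theorem stmt_8 (m n : ℕ) (hm : 1 ≤ m) (hmn : m < n)
    (s : ℝ) (hs : s = (n : ℝ) / (m : ℝ) - 1)
    (γ0 γ1 : ℝ) (hγ0 : 0 < γ0) (hγ0' : γ0 ≤ 1) (hγ1 : 1 ≤ γ1)
    (δ0 : ℝ) (hδ0 : 0 < δ0)
    (A A' : Finset (EuclideanSpace ℂ (Fin n))) (hA : A.Nonempty) (hA' : A'.Nonempty)
    (ν ν' : EuclideanSpace ℂ (Fin n) → ℝ)
    (hνpos : ∀ a ∈ A, 0 < ν a) (hνlb : ∀ a ∈ A, γ0 ≤ ν a) (hνsum : ∑ a ∈ A, ν a ≤ γ1)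
    (hν'pos : ∀ a ∈ A', 0 < ν' a) (hν'lb : ∀ a ∈ A', γ0 ≤ ν' a)
    (hν'sum : ∑ a ∈ A', ν' a ≤ γ1)
    (ρ : ℝ) (hρ : 0 ≤ ρ)
    (β : EuclideanSpace ℂ (Fin n) → EuclideanSpace ℂ (Fin n))
    (hβ : Set.BijOn β (A : Set (EuclideanSpace ℂ (Fin n)))
      (A' : Set (EuclideanSpace ℂ (Fin n))))
    (hβρ : ∀ a ∈ A, ‖a - β a‖ + |ν a - ν' (β a)| ≤ ρ)
    (δ : ℝ) (hδ : 0 < δ) (hδδ0 : δ ≤ δ0)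
    (z : EuclideanSpace ℂ (Fin n))
    (hz : z ∉ ⋃ a ∈ A, Metric.ball a (ν a ^ (1 / (2 * s)) * δ))
    (z' : EuclideanSpace ℂ (Fin n))
    (hz' : z' ∉ ⋃ a ∈ A', Metric.ball a (ν' a ^ (1 / (2 * s)) * δ)) :
    ∑ a ∈ A', -(ν' a * ‖z' - a‖ ^ (-(2 * s)))
      ≤ ∑ a ∈ A, -(ν a * ‖z - a‖ ^ (-(2 * s)))
        + (2 * s * γ1 * γ0 ^ (-(2 * s + 1) / (2 * s)) + γ1 * δ0 / γ0 ^ 2)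
          * δ ^ (-(2 * s) - 1) * (‖z - z'‖ + ρ) := by
  -- positivity of p = 2s
  have hmpos : (0:ℝ) < (m:ℝ) := by exact_mod_cast hm
  have hspos : 0 < s := by
    rw [hs]
    have : (1:ℝ) < (n:ℝ) / (m:ℝ) := (one_lt_div hmpos).mpr (by exact_mod_cast hmn)
    linarith
  set p : ℝ := 2 * s with hpdef
  have hp : 0 < p := by positivity
  set c : ℝ := γ0 ^ (1 / p) * δ with hcdef
  have hc : 0 < c := mul_pos (rpow_pos_of_pos hγ0 _) hδ
  -- distances
  have hzdist : ∀ a ∈ A, c ≤ ‖z - a‖ := by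
    intro a ha
    simp only [Set.mem_iUnion, not_exists] at hz
    have h := hz a ha
    rw [Metric.mem_ball, not_lt, dist_eq_norm] at h
    refine le_trans ?_ h
    exact mul_le_mul_of_nonneg_right
      (Real.rpow_le_rpow hγ0.le (hνlb a ha) (by positivity)) hδ.le
  have hz'dist : ∀ a ∈ A', c ≤ ‖z' - a‖ := by
    intro a ha
    simp only [Set.mem_iUnion, not_exists] at hz'
    have h := hz' a ha
    rw [Metric.mem_ball, not_lt, dist_eq_norm] at h
    refine le_trans ?_ h
    exact mul_le_mul_of_nonneg_right
      (Real.rpow_le_rpow hγ0.le (hν'lb a ha) (by positivity)) hδ.le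
  -- reindex the sum over A' via β
  have hsum' : ∑ a ∈ A', -(ν' a * ‖z' - a‖ ^ (-p))
      = ∑ a ∈ A, -(ν' (β a) * ‖z' - β a‖ ^ (-p)) := by
    refine (Finset.sum_bij (fun a _ => β a) ?_ ?_ ?_ ?_).symm
    · intro a ha
      exact_mod_cast hβ.mapsTo (by exact_mod_cast ha)
    · intro a ha b hb h
      exact hβ.injOn (by exact_mod_cast ha) (by exact_mod_cast hb) h
    · intro a' ha'
      obtain ⟨a, ha, rfl⟩ := hβ.surjOn (by exact_mod_cast ha' : a' ∈ (A' : Set _))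
      exact ⟨a, by exact_mod_cast ha, rfl⟩
    · intro a ha; rfl
  -- per-term bound
  have hX : 0 ≤ ‖z - z'‖ + ρ := by positivity
  have hterm : ∀ a ∈ A,
      -(ν' (β a) * ‖z' - β a‖ ^ (-p)) ≤ -(ν a * ‖z - a‖ ^ (-p))
        + (ν a * (p * c ^ (-p - 1) * (‖z - z'‖ + ρ)) + ρ * c ^ (-p)) := by
    intro a ha
    have hβa : β a ∈ A' := by exact_mod_cast hβ.mapsTo (by exact_mod_cast ha)
    have hr1 : c ≤ ‖z - a‖ := hzdist a ha
    have hr2 : c ≤ ‖z' - β a‖ := hz'dist _ hβa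
    have hρ1 : ‖a - β a‖ ≤ ρ := by
      have := hβρ a ha; have := abs_nonneg (ν a - ν' (β a)); linarith
    have hρ2 : |ν a - ν' (β a)| ≤ ρ := by
      have := hβρ a ha; have := norm_nonneg (a - β a); linarith
    have hdist : |‖z - a‖ - ‖z' - β a‖| ≤ ‖z - z'‖ + ρ := by
      calc |‖z - a‖ - ‖z' - β a‖| ≤ ‖(z - a) - (z' - β a)‖ := abs_norm_sub_norm_le _ _
        _ = ‖(z - z') - (a - β a)‖ := by congr 1; abel
        _ ≤ ‖z - z'‖ + ‖a - β a‖ := norm_sub_le _ _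
        _ ≤ ‖z - z'‖ + ρ := by linarith
    have hlip : ‖z - a‖ ^ (-p) - ‖z' - β a‖ ^ (-p)
        ≤ p * c ^ (-p - 1) * (‖z - z'‖ + ρ) := by
      refine le_trans (lip_aux p c hp hc _ _ hr1 hr2) ?_
      exact mul_le_mul_of_nonneg_left hdist (by positivity)
    have hr2bd : ‖z' - β a‖ ^ (-p) ≤ c ^ (-p) :=
      Real.rpow_le_rpow_of_nonpos hc hr2 (by linarith)
    have hr2pos : 0 ≤ ‖z' - β a‖ ^ (-p) := (rpow_pos_of_pos (lt_of_lt_of_le hc hr2) _).le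
    have hνa : 0 < ν a := hνpos a ha
    have h2 : (ν a - ν' (β a)) * ‖z' - β a‖ ^ (-p) ≤ ρ * c ^ (-p) := by
      calc (ν a - ν' (β a)) * ‖z' - β a‖ ^ (-p)
          ≤ |ν a - ν' (β a)| * ‖z' - β a‖ ^ (-p) :=
            mul_le_mul_of_nonneg_right (le_abs_self _) hr2pos
        _ ≤ ρ * c ^ (-p) := mul_le_mul hρ2 hr2bd hr2pos hρ
    nlinarith [mul_le_mul_of_nonneg_left hlip hνa.le]
  -- sum the bounds
  have hcard : (A.card : ℝ) ≤ γ1 / γ0 := by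
    rw [le_div_iff₀ hγ0]
    calc (A.card : ℝ) * γ0 = ∑ _a ∈ A, γ0 := by rw [Finset.sum_const, nsmul_eq_mul]
      _ ≤ ∑ a ∈ A, ν a := Finset.sum_le_sum hνlb
      _ ≤ γ1 := hνsum
  have hsumbound : ∑ a ∈ A, -(ν' (β a) * ‖z' - β a‖ ^ (-p))
      ≤ ∑ a ∈ A, -(ν a * ‖z - a‖ ^ (-p))
        + (γ1 * (p * c ^ (-p - 1) * (‖z - z'‖ + ρ)) + (γ1 / γ0) * (ρ * c ^ (-p))) := by
    have h1 := Finset.sum_le_sum hterm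
    rw [Finset.sum_add_distrib, Finset.sum_add_distrib, Finset.sum_const] at h1
    refine h1.trans ?_
    have hK1 : 0 ≤ p * c ^ (-p - 1) * (‖z - z'‖ + ρ) := by positivity
    have hK2 : 0 ≤ ρ * c ^ (-p) := by positivity
    have e1 : ∑ a ∈ A, ν a * (p * c ^ (-p - 1) * (‖z - z'‖ + ρ))
        ≤ γ1 * (p * c ^ (-p - 1) * (‖z - z'‖ + ρ)) := by
      rw [← Finset.sum_mul]
      exact mul_le_mul_of_nonneg_right hνsum hK1
    have e2 : (A.card : ℝ) * (ρ * c ^ (-p)) ≤ (γ1 / γ0) * (ρ * c ^ (-p)) :=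
      mul_le_mul_of_nonneg_right hcard hK2
    have : A.card • (ρ * c ^ (-p)) = (A.card : ℝ) * (ρ * c ^ (-p)) := by
      simp [nsmul_eq_mul]
    linarith [this ▸ e2, e1]
  -- constant arithmetic
  have hcp1 : c ^ (-p - 1) = γ0 ^ (-(p + 1) / p) * δ ^ (-p - 1) := by
    rw [hcdef, Real.mul_rpow (by positivity) hδ.le, ← Real.rpow_mul hγ0.le]
    congr 2
    field_simp
    ring
  have hcp : c ^ (-p) = γ0⁻¹ * (δ * δ ^ (-p - 1)) := by
    rw [hcdef, Real.mul_rpow (by positivity) hδ.le, ← Real.rpow_mul hγ0.le,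
      show 1 / p * (-p) = (-1 : ℝ) by field_simp, Real.rpow_neg_one]
    congr 1
    have h := Real.rpow_add hδ 1 (-p - 1)
    rw [Real.rpow_one, show (1 : ℝ) + (-p - 1) = -p by ring] at h
    exact h
  rw [hcp1, hcp] at hsumbound
  rw [hsum']
  set G : ℝ := γ0 ^ (-(p + 1) / p) with hGdef
  set D : ℝ := δ ^ (-p - 1) with hDdef
  set X : ℝ := ‖z - z'‖ + ρ with hXdef
  have hG : 0 < G := rpow_pos_of_pos hγ0 _
  have hD : 0 < D := rpow_pos_of_pos hδ _
  have hρX : ρ ≤ X := by rw [hXdef]; have := norm_nonneg (z - z'); linarith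
  have key : γ1 * (p * (G * D) * X) + γ1 / γ0 * (ρ * (γ0⁻¹ * (δ * D)))
      ≤ (p * γ1 * G + γ1 * δ0 / γ0 ^ 2) * D * X := by
    have h2 : ρ * δ ≤ X * δ0 := by nlinarith
    have e : γ1 / γ0 * (ρ * (γ0⁻¹ * (δ * D))) = γ1 / γ0 ^ 2 * (ρ * δ * D) := by
      field_simp
    have h3 : γ1 / γ0 ^ 2 * (ρ * δ * D) ≤ γ1 / γ0 ^ 2 * (X * δ0 * D) := by
      apply mul_le_mul_of_nonneg_left (mul_le_mul_of_nonneg_right h2 hD.le) (by positivity)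
    have eq1 : γ1 * (p * (G * D) * X) = p * γ1 * G * D * X := by ring
    have eq2 : γ1 / γ0 ^ 2 * (X * δ0 * D) = γ1 * δ0 / γ0 ^ 2 * D * X := by ring
    have eq3 : (p * γ1 * G + γ1 * δ0 / γ0 ^ 2) * D * X
        = p * γ1 * G * D * X + γ1 * δ0 / γ0 ^ 2 * D * X := by ring
    linarith
  linarith
end

section
/- Let n ≥ 1 be an integer, R0 ≥ 1, and let 0 < γ0 ≤ 1 ≤ γ1 and 0 < δ0 < R0 be real constants. Let A, A' ⊂ B(0,R0/2) ⊂ ℂ^n be nonempty finite sets with weight functions ν : A → (0,∞) and ν' : A' → (0,∞), each satisfying: all weights are ≥ γ0 and the total weight is ≤ γ1. Let ρ ≥ 0 and suppose there is a bijection β : A → A' such that |a − β(a)| + |ν(a) − ν'(β(a))| ≤ ρ for every a ∈ A. Then for every δ with 0 < δ ≤ δ0, every z ∈ B(0,R0/2) with z ∉ A_δ, and every z' ∈ B(0,R0/2) with z' ∉ A'_δ, one has ψ(z',A') ≤ ψ(z,A) + γ1·(1 + 1/γ0)·(R0/δ)^{1/γ0}·(|z − z'| + ρ). -/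
open Finset Metric Real

set_option maxHeartbeats 1600000 in
/-- case m = n. Lipschitz-type estimate for ψ along a bijection of poles:
ψ(z',A') ≤ ψ(z,A) + γ1·(1 + 1/γ0)·(R0/δ)^{1/γ0}·(|z − z'| + ρ). -/
theorem stmt_9 (n : ℕ) (hn : 1 ≤ n) (R0 : ℝ) (hR0 : 1 ≤ R0)
    (γ0 γ1 : ℝ) (hγ0 : 0 < γ0) (hγ0' : γ0 ≤ 1) (hγ1 : 1 ≤ γ1)
    (δ0 : ℝ) (hδ0 : 0 < δ0) (hδ0R : δ0 < R0)
    (A A' : Finset (EuclideanSpace ℂ (Fin n))) (hA : A.Nonempty) (hA' : A'.Nonempty)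
    (hAball : (A : Set (EuclideanSpace ℂ (Fin n))) ⊆ Metric.ball 0 (R0 / 2))
    (hA'ball : (A' : Set (EuclideanSpace ℂ (Fin n))) ⊆ Metric.ball 0 (R0 / 2))
    (ν ν' : EuclideanSpace ℂ (Fin n) → ℝ)
    (hνpos : ∀ a ∈ A, 0 < ν a) (hνlb : ∀ a ∈ A, γ0 ≤ ν a) (hνsum : ∑ a ∈ A, ν a ≤ γ1)
    (hν'pos : ∀ a ∈ A', 0 < ν' a) (hν'lb : ∀ a ∈ A', γ0 ≤ ν' a)
    (hν'sum : ∑ a ∈ A', ν' a ≤ γ1)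
    (ρ : ℝ) (hρ : 0 ≤ ρ)
    (β : EuclideanSpace ℂ (Fin n) → EuclideanSpace ℂ (Fin n))
    (hβ : Set.BijOn β (A : Set (EuclideanSpace ℂ (Fin n)))
      (A' : Set (EuclideanSpace ℂ (Fin n))))
    (hβρ : ∀ a ∈ A, ‖a - β a‖ + |ν a - ν' (β a)| ≤ ρ)
    (δ : ℝ) (hδ : 0 < δ) (hδδ0 : δ ≤ δ0)
    (z : EuclideanSpace ℂ (Fin n))
    (hzball : z ∈ Metric.ball (0 : EuclideanSpace ℂ (Fin n)) (R0 / 2))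
    (hz : z ∉ ⋃ a ∈ A, Metric.ball a (R0 * (δ / R0) ^ (1 / ν a)))
    (z' : EuclideanSpace ℂ (Fin n))
    (hz'ball : z' ∈ Metric.ball (0 : EuclideanSpace ℂ (Fin n)) (R0 / 2))
    (hz' : z' ∉ ⋃ a ∈ A', Metric.ball a (R0 * (δ / R0) ^ (1 / ν' a))) :
    ∑ a ∈ A', ν' a * Real.log (‖z' - a‖ / R0)
      ≤ ∑ a ∈ A, ν a * Real.log (‖z - a‖ / R0)
        + γ1 * (1 + 1 / γ0) * (R0 / δ) ^ (1 / γ0) * (‖z - z'‖ + ρ) := by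
  have hδR : δ < R0 := lt_of_le_of_lt hδδ0 hδ0R
  have hR0pos : (0:ℝ) < R0 := by linarith
  set d := ‖z - z'‖ with hd
  have hdnn : 0 ≤ d := norm_nonneg _
  set K := (R0/δ) ^ (1/γ0 : ℝ) with hKdef
  have hKpos : 0 < K := Real.rpow_pos_of_pos (by positivity) _
  have hK1 : 1 ≤ K := by
    rw [hKdef]
    calc (1:ℝ) = (R0/δ) ^ (0:ℝ) := (Real.rpow_zero _).symm
    _ ≤ (R0/δ) ^ (1/γ0 : ℝ) := Real.rpow_le_rpow_of_exponent_le
        (by rw [le_div_iff₀ hδ]; linarith) (by positivity)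
  have hmul1 : (δ/R0 : ℝ) * (R0/δ) = 1 := by field_simp
  have hKinv : (δ/R0 : ℝ) ^ (1/γ0 : ℝ) * K = 1 := by
    rw [hKdef, ← Real.mul_rpow (by positivity) (by positivity), hmul1, Real.one_rpow]
  have hRK : R0 / K = R0 * (δ/R0) ^ (1/γ0 : ℝ) := by
    rw [div_eq_iff hKpos.ne', mul_assoc, hKinv, mul_one]
  -- lower bounds on distances
  simp only [Set.mem_iUnion, Metric.mem_ball, exists_prop, not_exists, not_and, not_lt] at hz hz'
  have hzA : ∀ a ∈ A, R0 / K ≤ ‖z - a‖ := by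
    intro a ha
    have h1 : R0 * (δ/R0) ^ (1 / ν a) ≤ dist z a := hz a ha
    have h2 : (δ/R0 : ℝ) ^ (1/γ0 : ℝ) ≤ (δ/R0) ^ (1 / ν a) := by
      apply Real.rpow_le_rpow_of_exponent_ge (by positivity)
        (by rw [div_le_one hR0pos]; linarith)
      exact one_div_le_one_div_of_le hγ0 (hνlb a ha)
    have h3 : R0 * (δ/R0) ^ (1/γ0 : ℝ) ≤ R0 * (δ/R0) ^ (1 / ν a) := by
      exact mul_le_mul_of_nonneg_left h2 hR0pos.le
    rw [hRK, ← dist_eq_norm]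
    linarith
  have hz'A' : ∀ a ∈ A', R0 / K ≤ ‖z' - a‖ := by
    intro a ha
    have h1 : R0 * (δ/R0) ^ (1 / ν' a) ≤ dist z' a := hz' a ha
    have h2 : (δ/R0 : ℝ) ^ (1/γ0 : ℝ) ≤ (δ/R0) ^ (1 / ν' a) := by
      apply Real.rpow_le_rpow_of_exponent_ge (by positivity)
        (by rw [div_le_one hR0pos]; linarith)
      exact one_div_le_one_div_of_le hγ0 (hν'lb a ha)
    have h3 : R0 * (δ/R0) ^ (1/γ0 : ℝ) ≤ R0 * (δ/R0) ^ (1 / ν' a) := by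
      exact mul_le_mul_of_nonneg_left h2 hR0pos.le
    rw [hRK, ← dist_eq_norm]
    linarith
  have hzAub : ∀ a ∈ A, ‖z - a‖ < R0 := by
    intro a ha
    have h1 : ‖z‖ < R0/2 := mem_ball_zero_iff.mp hzball
    have h2 : ‖a‖ < R0/2 := mem_ball_zero_iff.mp (hAball ha)
    calc ‖z - a‖ ≤ ‖z‖ + ‖a‖ := norm_sub_le _ _
    _ < R0 := by linarith
  -- sums over A' equal sums over A via β
  have hbijsum : ∀ f : EuclideanSpace ℂ (Fin n) → ℝ,
      ∑ b ∈ A', f b = ∑ a ∈ A, f (β a) := by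
    intro f
    refine (Finset.sum_bij (fun a _ => β a) ?_ ?_ ?_ fun a ha => rfl).symm
    · intro a ha; exact hβ.mapsTo ha
    · intro a ha a' ha' h; exact hβ.injOn ha ha' h
    · intro b hb
      obtain ⟨a, ha, hab⟩ := hβ.surjOn hb
      exact ⟨a, ha, hab⟩
  -- per-term estimate
  have key : ∀ a ∈ A, ν' (β a) * Real.log (‖z' - β a‖ / R0)
      ≤ ν a * Real.log (‖z - a‖ / R0) + ν' (β a) * (K*(d+ρ)) + ρ*K := by
    intro a ha
    have hb : β a ∈ A' := hβ.mapsTo ha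
    set c := ‖z - a‖ with hc0
    set c' := ‖z' - β a‖ with hc'0
    have hc : R0 / K ≤ c := hzA a ha
    have hcpos : 0 < c := lt_of_lt_of_le (by positivity) hc
    have hc' : R0 / K ≤ c' := hz'A' _ hb
    have hc'pos : 0 < c' := lt_of_lt_of_le (by positivity) hc'
    have hcub : c < R0 := hzAub a ha
    have hKc : 1 ≤ K * c := by
      have h := (div_le_iff₀ hKpos).mp hc
      linarith
    have haβ : ‖a - β a‖ ≤ ρ := by
      have h1 := hβρ a ha
      have h2 := abs_nonneg (ν a - ν' (β a))
      linarith
    have hdiff : c' - c ≤ d + ρ := by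
      have h2 : c' ≤ ‖z - a‖ + ‖(z' - z) + (a - β a)‖ := by
        rw [hc'0, show z' - β a = (z - a) + ((z' - z) + (a - β a)) by abel]
        exact norm_add_le _ _
      have h3 : ‖(z' - z) + (a - β a)‖ ≤ ‖z' - z‖ + ‖a - β a‖ := norm_add_le _ _
      have h4 : ‖z' - z‖ = d := by rw [hd, norm_sub_rev]
      rw [← hc0] at h2
      linarith
    have hlogdiff : Real.log (c'/R0) ≤ Real.log (c/R0) + K*(d+ρ) := by
      have h3 : Real.log (c'/R0) - Real.log (c/R0) = Real.log (c'/c) := by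
        rw [Real.log_div hc'pos.ne' hR0pos.ne', Real.log_div hcpos.ne' hR0pos.ne',
          Real.log_div hc'pos.ne' hcpos.ne']
        ring
      have h4 : Real.log (c'/c) ≤ c'/c - 1 := Real.log_le_sub_one_of_pos (by positivity)
      have h5 : c'/c - 1 ≤ K*(d+ρ) := by
        rw [div_sub_one hcpos.ne', div_le_iff₀ hcpos]
        nlinarith [mul_le_mul_of_nonneg_left hKc (by linarith : (0:ℝ) ≤ d + ρ)]
      linarith
    have hlogub : Real.log (c/R0) ≤ 0 :=
      Real.log_nonpos (by positivity) (by rw [div_le_one hR0pos]; linarith)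
    have hloglb : -K ≤ Real.log (c/R0) := by
      have h6 : R0/c ≤ K := by
        have h := (div_le_iff₀ hKpos).mp hc
        rw [div_le_iff₀ hcpos]
        linarith
      have h7 : Real.log (R0/c) ≤ Real.log K := Real.log_le_log (by positivity) h6
      have h8 : Real.log K ≤ K - 1 := Real.log_le_sub_one_of_pos hKpos
      have h9 : Real.log (c/R0) = - Real.log (R0/c) := by
        rw [← Real.log_inv]
        congr 1
        field_simp
      linarith
    have hnudiff : |ν' (β a) - ν a| ≤ ρ := by
      rw [abs_sub_comm]
      have h1 := hβρ a ha
      have h2 := norm_nonneg (a - β a)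
      linarith
    have hpiece2 : (ν' (β a) - ν a) * Real.log (c/R0) ≤ ρ * K := by
      calc (ν' (β a) - ν a) * Real.log (c/R0)
          ≤ |(ν' (β a) - ν a) * Real.log (c/R0)| := le_abs_self _
      _ = |ν' (β a) - ν a| * |Real.log (c/R0)| := abs_mul _ _
      _ ≤ ρ * K := by
          apply mul_le_mul hnudiff ?_ (abs_nonneg _) hρ
          rw [abs_of_nonpos hlogub]
          linarith
    have hν'b : 0 < ν' (β a) := hν'pos _ hb
    have e1 : ν' (β a) * Real.log (c'/R0)
        ≤ ν' (β a) * Real.log (c/R0) + ν' (β a) * (K*(d+ρ)) := by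
      have h := mul_le_mul_of_nonneg_left hlogdiff hν'b.le
      rw [mul_add] at h
      linarith
    have e2 : ν' (β a) * Real.log (c/R0)
        = ν a * Real.log (c/R0) + (ν' (β a) - ν a) * Real.log (c/R0) := by ring
    linarith
  -- assemble
  rw [hbijsum (fun b => ν' b * Real.log (‖z' - b‖ / R0))]
  have hsumle : ∑ a ∈ A, ν' (β a) * Real.log (‖z' - β a‖/R0)
      ≤ ∑ a ∈ A, (ν a * Real.log (‖z - a‖/R0) + ν' (β a) * (K*(d+ρ)) + ρ*K) :=
    Finset.sum_le_sum key
  have hsplit : ∑ a ∈ A, (ν a * Real.log (‖z-a‖/R0) + ν' (β a)*(K*(d+ρ)) + ρ*K)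
      = ∑ a ∈ A, ν a * Real.log (‖z-a‖/R0)
        + (∑ a ∈ A, ν' (β a))*(K*(d+ρ)) + (A.card:ℝ)*(ρ*K) := by
    rw [Finset.sum_add_distrib, Finset.sum_add_distrib, ← Finset.sum_mul,
      Finset.sum_const, nsmul_eq_mul]
  have hS : ∑ a ∈ A, ν' (β a) ≤ γ1 := by
    rw [← hbijsum ν']; exact hν'sum
  have hN : (A.card:ℝ) * γ0 ≤ γ1 := by
    calc (A.card:ℝ) * γ0 = ∑ _a ∈ A, γ0 := by rw [Finset.sum_const, nsmul_eq_mul]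
    _ ≤ ∑ a ∈ A, ν a := Finset.sum_le_sum hνlb
    _ ≤ γ1 := hνsum
  have hfin : (∑ a ∈ A, ν' (β a)) * (K*(d+ρ)) + (A.card:ℝ)*(ρ*K)
      ≤ γ1*(1+1/γ0)*K*(d+ρ) := by
    have hKd : 0 ≤ K*(d+ρ) := mul_nonneg hKpos.le (by linarith)
    have h1 : (∑ a ∈ A, ν' (β a)) * (K*(d+ρ)) ≤ γ1*(K*(d+ρ)) :=
      mul_le_mul_of_nonneg_right hS hKd
    have h2 : (A.card:ℝ)*(ρ*K) ≤ (γ1/γ0)*(K*(d+ρ)) := by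
      have hNle : (A.card:ℝ) ≤ γ1/γ0 := (le_div_iff₀ hγ0).mpr hN
      have hρK : 0 ≤ ρ*K := mul_nonneg hρ hKpos.le
      calc (A.card:ℝ)*(ρ*K) ≤ (γ1/γ0)*(ρ*K) := mul_le_mul_of_nonneg_right hNle hρK
      _ ≤ (γ1/γ0)*(K*(d+ρ)) := by
          apply mul_le_mul_of_nonneg_left ?_ (div_nonneg (by linarith) hγ0.le)
          have h3 := mul_nonneg hKpos.le hdnn
          linarith
    have heq : γ1*(1+1/γ0)*K*(d+ρ) = γ1*(K*(d+ρ)) + (γ1/γ0)*(K*(d+ρ)) := by ring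
    linarith
  calc ∑ a ∈ A, ν' (β a) * Real.log (‖z' - β a‖/R0)
      ≤ ∑ a ∈ A, (ν a * Real.log (‖z - a‖/R0) + ν' (β a) * (K*(d+ρ)) + ρ*K) := hsumle
  _ = ∑ a ∈ A, ν a * Real.log (‖z-a‖/R0)
        + (∑ a ∈ A, ν' (β a))*(K*(d+ρ)) + (A.card:ℝ)*(ρ*K) := hsplit
  _ ≤ ∑ a ∈ A, ν a * Real.log (‖z-a‖/R0) + γ1*(1+1/γ0)*K*(d+ρ) := by linarith
end

section
/- Let n ≥ 1 be an integer and R0 ≥ 1 a real constant. Let 0 < t0 ≤ R0, let z, z', a, a' ∈ ℂ^n satisfy t0 ≤ |z − a| ≤ R0 and |z' − a'| ≥ t0, and let ν, ν' > 0. Then ν'·log(|z' − a'|/R0) − ν·log(|z − a|/R0) ≤ (ν'/t0)·(|z' − z| + |a' − a|) + log(R0/t0)·|ν' − ν|. -/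
open Real

/-- pointwise comparison inequality, case m = n. -/
theorem stmt_11 (n : ℕ) (hn : 1 ≤ n) (R0 : ℝ) (hR0 : 1 ≤ R0)
    (t0 : ℝ) (ht0 : 0 < t0) (ht0R : t0 ≤ R0)
    (z z' a a' : EuclideanSpace ℂ (Fin n))
    (hza : t0 ≤ ‖z - a‖) (hzaR : ‖z - a‖ ≤ R0) (hz'a' : t0 ≤ ‖z' - a'‖)
    (ν ν' : ℝ) (hν : 0 < ν) (hν' : 0 < ν') :
    ν' * Real.log (‖z' - a'‖ / R0) - ν * Real.log (‖z - a‖ / R0)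
      ≤ ν' / t0 * (‖z' - z‖ + ‖a' - a‖) + Real.log (R0 / t0) * |ν' - ν| := by
  set r := ‖z - a‖ with hrdef
  set r' := ‖z' - a'‖ with hr'def
  have hrpos : 0 < r := lt_of_lt_of_le ht0 hza
  have hr'pos : 0 < r' := lt_of_lt_of_le ht0 hz'a'
  have hR0pos : 0 < R0 := lt_of_lt_of_le zero_lt_one hR0
  -- key1 : log r' - log r ≤ (r' - r)/r
  have key1 : Real.log r' - Real.log r ≤ (r' - r) / r := by
    have h := Real.log_le_sub_one_of_pos (div_pos hr'pos hrpos)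
    rw [Real.log_div (ne_of_gt hr'pos) (ne_of_gt hrpos)] at h
    calc Real.log r' - Real.log r ≤ r' / r - 1 := h
      _ = (r' - r) / r := by field_simp
  -- key3 : |r' - r| ≤ ‖z' - z‖ + ‖a' - a‖
  have key3 : |r' - r| ≤ ‖z' - z‖ + ‖a' - a‖ := by
    calc |r' - r| ≤ ‖(z' - a') - (z - a)‖ := abs_norm_sub_norm_le _ _
      _ = ‖(z' - z) - (a' - a)‖ := by congr 1; abel
      _ ≤ ‖z' - z‖ + ‖a' - a‖ := norm_sub_le _ _
  have key2 : (r' - r) / r ≤ (‖z' - z‖ + ‖a' - a‖) / t0 := by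
    calc (r' - r) / r ≤ |r' - r| / r := by gcongr; exact le_abs_self _
      _ ≤ (‖z' - z‖ + ‖a' - a‖) / t0 := div_le_div₀ (by positivity) key3 ht0 hza
  -- key4 : |log (r / R0)| ≤ log (R0 / t0)
  have key4 : |Real.log (r / R0)| ≤ Real.log (R0 / t0) := by
    have h1 : Real.log (r / R0) ≤ 0 :=
      Real.log_nonpos (by positivity) (by rw [div_le_one hR0pos]; exact hzaR)
    rw [abs_of_nonpos h1]
    rw [← Real.log_inv]
    rw [inv_div]
    exact Real.log_le_log (by positivity) (div_le_div_of_nonneg_left (le_of_lt hR0pos) ht0 hza)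
  -- decompose
  have decomp : ν' * Real.log (r' / R0) - ν * Real.log (r / R0)
      = ν' * (Real.log r' - Real.log r) + (ν' - ν) * Real.log (r / R0) := by
    rw [Real.log_div (ne_of_gt hr'pos) (ne_of_gt hR0pos),
      Real.log_div (ne_of_gt hrpos) (ne_of_gt hR0pos)]
    ring
  rw [decomp]
  have t1 : ν' * (Real.log r' - Real.log r) ≤ ν' / t0 * (‖z' - z‖ + ‖a' - a‖) := by
    have := le_trans key1 key2
    calc ν' * (Real.log r' - Real.log r) ≤ ν' * ((‖z' - z‖ + ‖a' - a‖) / t0) :=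
          mul_le_mul_of_nonneg_left this (le_of_lt hν')
      _ = ν' / t0 * (‖z' - z‖ + ‖a' - a‖) := by ring
  have t2 : (ν' - ν) * Real.log (r / R0) ≤ Real.log (R0 / t0) * |ν' - ν| := by
    calc (ν' - ν) * Real.log (r / R0) ≤ |(ν' - ν) * Real.log (r / R0)| := le_abs_self _
      _ = |ν' - ν| * |Real.log (r / R0)| := abs_mul _ _
      _ ≤ |ν' - ν| * Real.log (R0 / t0) := mul_le_mul_of_nonneg_left key4 (abs_nonneg _)
      _ = Real.log (R0 / t0) * |ν' - ν| := mul_comm _ _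
  linarith
end
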